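/- arXiv:2510.06851 — 7 statements merged into one kernel-verified Lean document; each statement's English description precedes it below -/
import Mathlib

section
/- For every Φ ∈ ℝ^m, the average of the randomized alternating phase sequences under the product distribution on index tuples equals the deterministic sequence: Σ_{κ ∈ {1,…,L}^m} (∏_{j=1}^m λ_{κ_j}) · U_Φ^{(κ)} = U_Φ. -/
open Matrix

section Aux
variable {M : Type*} [Ring M] [Algebra ℂ M]

lemma list_smul_prod {ι : Type*} (l : List ι) (a : ι → ℂ) (f : ι → M) :
    (l.map a).prod • (l.map f).prod = (l.map fun j => a j • f j).prod := by
  induction l with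
  | nil => simp
  | cons x xs ih =>
    simp only [List.map_cons, List.prod_cons, ← ih, smul_mul_smul_comm]

set_option linter.unusedSectionVars false in
lemma sum_fun_list_prod (L : ℕ) (n : ℕ) (h : Fin n → Fin L → M) :
    ∑ κ : Fin n → Fin L, ((List.finRange n).map fun j => h j (κ j)).prod
      = ((List.finRange n).map fun j => ∑ k, h j k).prod := by
  induction n with
  | zero => simp
  | succ n ih =>
    rw [← Equiv.sum_comp (Fin.consEquiv fun _ : Fin (n+1) => Fin L)]
    simp only [List.finRange_succ, List.map_cons, List.map_map, List.prod_cons]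
    rw [Fintype.sum_prod_type]
    simp only [Fin.consEquiv_apply]
    simp only [Function.comp_def, Fin.cons_zero, Fin.cons_succ]
    rw [← ih fun j k => h j.succ k]
    rw [Finset.sum_mul_sum]
end Aux

/-- For an N×N matrix `A`, the 2N×2N block matrix `[[c·I, s·A],[s·A†, −c·I]]`. -/
noncomputable def embedMat (N : ℕ) (c s : ℝ) (A : Matrix (Fin N) (Fin N) ℂ) :
    Matrix (Fin N ⊕ Fin N) (Fin N ⊕ Fin N) ℂ :=
  Matrix.fromBlocks ((c : ℂ) • 1) ((s : ℂ) • A) ((s : ℂ) • Aᴴ) (-((c : ℂ) • 1))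

/-- The unitary `e^{iφ(2Π̃−I)} = [[e^{iφ}·I, 0],[0, e^{−iφ}·I]]`. -/
noncomputable def phasePlus (N : ℕ) (φ : ℝ) : Matrix (Fin N ⊕ Fin N) (Fin N ⊕ Fin N) ℂ :=
  Matrix.fromBlocks (Complex.exp (Complex.I * φ) • 1) 0 0 (Complex.exp (-(Complex.I * φ)) • 1)

/-- The unitary `e^{iφ(2Π−I)} = [[e^{−iφ}·I, 0],[0, e^{iφ}·I]]`. -/
noncomputable def phaseMinus (N : ℕ) (φ : ℝ) : Matrix (Fin N ⊕ Fin N) (Fin N ⊕ Fin N) ℂ :=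
  Matrix.fromBlocks (Complex.exp (-(Complex.I * φ)) • 1) 0 0 (Complex.exp (Complex.I * φ) • 1)

/-- The alternating phase sequence built from matrices `V 0, …, V (m−1)` (1-indexed as
`V_1, …, V_m`): for even `m` it is
`∏_{j=1}^{m/2} (e^{iφ_{2j−1}(2Π−I)}·V_{2j−1}ᴴ·e^{iφ_{2j}(2Π̃−I)}·V_{2j})` and for odd `m` it is
`e^{iφ_1(2Π̃−I)}·V_1·∏_{j=1}^{(m−1)/2} (e^{iφ_{2j}(2Π−I)}·V_{2j}ᴴ·e^{iφ_{2j+1}(2Π̃−I)}·V_{2j+1})`;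
equivalently, the position-`p` factor (for `p = 1,…,m`) is `e^{iφ_p(2Π̃−I)}·V_p` when `m − p`
is even and `e^{iφ_p(2Π−I)}·V_pᴴ` when `m − p` is odd, multiplied left to right. -/
noncomputable def phaseSeq (N m : ℕ) (φ : Fin m → ℝ)
    (V : Fin m → Matrix (Fin N ⊕ Fin N) (Fin N ⊕ Fin N) ℂ) :
    Matrix (Fin N ⊕ Fin N) (Fin N ⊕ Fin N) ℂ :=
  ((List.finRange m).map fun j =>
      if (m - (j.val + 1)) % 2 = 0 then phasePlus N (φ j) * V j
      else phaseMinus N (φ j) * (V j)ᴴ).prod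

lemma embed_herm (N : ℕ) (c s : ℝ) (A : Matrix (Fin N) (Fin N) ℂ) :
    (embedMat N c s A)ᴴ = embedMat N c s A := by
  simp [embedMat, Matrix.fromBlocks_conjTranspose, Matrix.conjTranspose_smul,
    Complex.star_def, Complex.conj_ofReal]

lemma embed_avg (N L : ℕ) (c s : ℝ) (Hk : Fin L → Matrix (Fin N) (Fin N) ℂ)
    (lam : Fin L → ℝ) (hsum : ∑ k, lam k = 1) :
    ∑ k, ((lam k : ℝ) : ℂ) • embedMat N c s (Hk k)
      = embedMat N c s (∑ k, ((lam k : ℝ) : ℂ) • Hk k) := by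
  have h1 : (∑ k, ((lam k : ℝ) : ℂ)) = 1 := by
    rw [← Complex.ofReal_sum, hsum, Complex.ofReal_one]
  have h2 : (∑ k, ((lam k : ℝ) : ℂ) • Hk k)ᴴ = ∑ k, ((lam k : ℝ) : ℂ) • (Hk k)ᴴ := by
    simp [Matrix.conjTranspose_sum, Matrix.conjTranspose_smul, Complex.star_def,
      Complex.conj_ofReal]
  ext i j
  rcases i with i | i <;> rcases j with j | j <;>
    simp [embedMat, Matrix.fromBlocks, Finset.sum_apply, h2, Matrix.sum_apply,
      Finset.mul_sum, ← Finset.sum_mul, h1, mul_comm, mul_left_comm] <;>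
  · simp only [show ∀ x : Fin L, (c:ℂ) * ((lam x : ℂ) * (1 : Matrix (Fin N) (Fin N) ℂ) i j)
        = (lam x : ℂ) * ((c:ℂ) * (1 : Matrix (Fin N) (Fin N) ℂ) i j) from fun x => by ring]
    rw [← Finset.sum_mul, h1, one_mul]

/-- for unitaries `H_1,…,H_L` and weights `λ_k ≥ 0` with `Σ_k λ_k = 1`,
setting `H = Σ_k λ_k·H_k`, `U_k = [[c·I, s·H_k],[s·H_k†, −c·I]]` and
`U = [[c·I, s·H],[s·H†, −c·I]]`, for every `Φ ∈ ℝ^m` the average of the randomized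
alternating phase sequences under the product distribution on index tuples equals the
deterministic sequence:
`Σ_{κ ∈ {1,…,L}^m} (∏_{j=1}^m λ_{κ_j})·U_Φ^{(κ)} = U_Φ`. -/
theorem stmt2 (N L m : ℕ) (hN : 1 ≤ N) (hL : 1 ≤ L) (hm : 1 ≤ m)
    (Hk : Fin L → Matrix (Fin N) (Fin N) ℂ)
    (hunit : ∀ k, Hk k ∈ Matrix.unitaryGroup (Fin N) ℂ)
    (lam : Fin L → ℝ) (hlam : ∀ k, 0 ≤ lam k) (hsum : ∑ k, lam k = 1)
    (c s : ℝ) (φ : Fin m → ℝ) :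
    ∑ κ : Fin m → Fin L, (((∏ j, lam (κ j)) : ℝ) : ℂ) •
        phaseSeq N m φ (fun j => embedMat N c s (Hk (κ j)))
      = phaseSeq N m φ (fun _ => embedMat N c s (∑ k, ((lam k : ℝ) : ℂ) • Hk k)) := by
  classical
  have havg := embed_avg N L c s Hk lam hsum
  unfold phaseSeq
  have step1 : ∀ κ : Fin m → Fin L,
      (((∏ j, lam (κ j)) : ℝ) : ℂ) • ((List.finRange m).map fun j =>
          if (m - (j.val + 1)) % 2 = 0 then phasePlus N (φ j) * embedMat N c s (Hk (κ j))
          else phaseMinus N (φ j) * (embedMat N c s (Hk (κ j)))ᴴ).prod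
      = ((List.finRange m).map fun j => ((lam (κ j) : ℝ) : ℂ) •
          (if (m - (j.val + 1)) % 2 = 0 then phasePlus N (φ j) * embedMat N c s (Hk (κ j))
           else phaseMinus N (φ j) * (embedMat N c s (Hk (κ j)))ᴴ)).prod := by
    intro κ
    rw [← list_smul_prod]
    congr 1
    rw [Complex.ofReal_prod, Fin.prod_univ_def]
  simp only [step1]
  rw [sum_fun_list_prod L m fun j k => ((lam k : ℝ) : ℂ) •
      (if (m - (j.val + 1)) % 2 = 0 then phasePlus N (φ j) * embedMat N c s (Hk k)
       else phaseMinus N (φ j) * (embedMat N c s (Hk k))ᴴ)]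
  congr 1
  apply List.map_congr_left
  intro j _
  by_cases hc : (m - (j.val + 1)) % 2 = 0
  · simp only [hc, if_true]
    simp only [← mul_smul_comm]
    rw [← Finset.mul_sum, havg]
  · simp only [hc, if_false, embed_herm]
    simp only [← mul_smul_comm]
    rw [← Finset.mul_sum, havg]
end

section
/- The integers r_1, …, r_m are strictly decreasing: r_1 > r_2 > ⋯ > r_m. In particular the r_j, and hence the sample points s_j = t/r_j, are pairwise distinct. -/
/-- `K = max{m/π, 2t/s}`. -/
noncomputable def Kval (m : ℕ) (t s : ℝ) : ℝ := max ((m : ℝ) / Real.pi) (2 * t / s)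

/-- `r_j = ⌈K / sin²(π(2j−1)/(8m))⌉` for `j ∈ {1,…,m}`. -/
noncomputable def rval (m : ℕ) (t s : ℝ) (j : ℕ) : ℕ :=
  ⌈Kval m t s / Real.sin (Real.pi * (2 * (j : ℝ) - 1) / (8 * (m : ℝ))) ^ 2⌉₊

/-- The sample point `s_j = t / r_j`. -/
noncomputable def sval (m : ℕ) (t s : ℝ) (j : ℕ) : ℝ := t / (rval m t s j : ℝ)

/-- The Richardson coefficient `b_j = ∏_{ℓ ∈ {1,…,m}, ℓ≠j} 1/(1 − r_ℓ/r_j)`. -/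
noncomputable def bval (m : ℕ) (t s : ℝ) (j : ℕ) : ℝ :=
  ∏ l ∈ (Finset.Icc 1 m).erase j, (1 - (rval m t s l : ℝ) / (rval m t s j : ℝ))⁻¹

open Real in
private lemma coslt' {x : ℝ} (h0 : 0 < x) (h1 : x ≤ π) : Real.cos x < 1 := by
  have := Real.cos_lt_cos_of_nonneg_of_le_pi le_rfl h1 h0
  simpa using this

open Real in
private lemma keyineq' {u v : ℝ} (hu : 0 < u) (huv : u ≤ v) (hv : v ≤ π / 2) :
    v - u ≤ (1 - Real.cos u)⁻¹ - (1 - Real.cos v)⁻¹ := by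
  set g : ℝ → ℝ := fun θ => (1 - Real.cos θ)⁻¹ + θ with hg
  have hpi : 0 < π := Real.pi_pos
  have hne : ∀ x ∈ Set.Icc u (π/2), 1 - Real.cos x ≠ 0 := by
    intro x hx
    have : Real.cos x < 1 := coslt' (lt_of_lt_of_le hu hx.1) (le_trans hx.2 (by linarith))
    linarith
  have hcont : ContinuousOn g (Set.Icc u (π/2)) := by
    apply ContinuousOn.add _ continuousOn_id
    exact (continuousOn_const.sub Real.continuousOn_cos).inv₀ hne
  have hderiv : ∀ x ∈ Set.Ioo u (π/2),
      HasDerivAt g (-(Real.sin x) / (1 - Real.cos x)^2 + 1) x := by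
    intro x hx
    have h1 : HasDerivAt (fun θ : ℝ => 1 - Real.cos θ) (Real.sin x) x := by
      exact ((hasDerivAt_const x (1:ℝ)).sub (Real.hasDerivAt_cos x)).congr_deriv (by ring)
    have hne' : 1 - Real.cos x ≠ 0 := hne x ⟨hx.1.le, hx.2.le⟩
    exact (h1.inv hne').add (hasDerivAt_id x)
  have hanti : AntitoneOn g (Set.Icc u (π/2)) := by
    have hint : interior (Set.Icc u (π/2)) = Set.Ioo u (π/2) := interior_Icc
    apply antitoneOn_of_deriv_nonpos (convex_Icc _ _) hcont
    · rw [hint]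
      exact fun x hx => ((hderiv x hx).differentiableAt).differentiableWithinAt
    · rw [hint]
      intro x hx
      rw [(hderiv x hx).deriv]
      have hx0 : 0 < x := lt_trans hu hx.1
      have hxp : x ≤ π := by linarith [hx.2.le]
      have hcnn : 0 ≤ Real.cos x := Real.cos_nonneg_of_mem_Icc ⟨by linarith, hx.2.le⟩
      have hsnn : 0 ≤ Real.sin x := Real.sin_nonneg_of_nonneg_of_le_pi hx0.le hxp
      have hs1 : Real.sin x ≤ 1 := Real.sin_le_one x
      have hd : 0 < 1 - Real.cos x := by
        have := coslt' hx0 hxp; linarith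
      have key : (1 - Real.cos x)^2 ≤ Real.sin x := by
        nlinarith [Real.sin_sq_add_cos_sq x]
      have h4 : (1:ℝ) ≤ Real.sin x / (1 - Real.cos x)^2 :=
        (one_le_div (by positivity)).mpr key
      rw [neg_div]
      linarith
  have := hanti ⟨le_rfl, le_trans huv hv⟩ ⟨huv, hv⟩ huv
  simp only [hg] at this
  linarith

open Real in
private lemma Kpos' (m : ℕ) (hm : 1 ≤ m) (t s : ℝ) : 0 < Kval m t s := by
  have h1 : (1:ℝ) ≤ m := by exact_mod_cast hm
  have : (0:ℝ) < (m:ℝ)/π := by positivity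
  exact lt_of_lt_of_le this (le_max_left _ _)

open Real in
private lemma rstep' (m : ℕ) (hm : 1 ≤ m) (t s : ℝ) (j : ℕ) (hj : 1 ≤ j) (hjm : j + 1 ≤ m) :
    rval m t s (j + 1) < rval m t s j := by
  have hpi := Real.pi_pos
  have hm1 : (1:ℝ) ≤ m := by exact_mod_cast hm
  have hj1 : (1:ℝ) ≤ j := by exact_mod_cast hj
  have hjm1 : (j:ℝ) + 1 ≤ m := by exact_mod_cast hjm
  set A := Kval m t s with hA
  have hApi : (m:ℝ)/π ≤ A := le_max_left _ _
  have hApos : 0 < A := Kpos' m hm t s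
  set u : ℝ := π * (2*(j:ℝ)-1)/(4*m) with hu_def
  set v : ℝ := π * (2*(j:ℝ)+1)/(4*m) with hv_def
  have hu : 0 < u := by
    apply div_pos (by nlinarith) (by positivity)
  have huv : u ≤ v := by
    apply div_le_div_of_nonneg_right ?_ (by positivity)
    · nlinarith
  have hv : v ≤ π/2 := by
    rw [hv_def, div_le_iff₀ (by positivity)]
    nlinarith
  have key := keyineq' hu huv hv
  have hvu : v - u = π / (2*m) := by
    rw [hu_def, hv_def]; field_simp; ring
  have hdu : 0 < 1 - Real.cos u := by linarith [coslt' hu (by linarith)]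
  have hdv : 0 < 1 - Real.cos v := by
    linarith [coslt' (lt_of_lt_of_le hu huv) (by linarith)]
  have hsin : ∀ w : ℝ, Real.sin (w/2)^2 = (1 - Real.cos w)/2 := by
    intro w
    have := Real.sin_sq_eq_half_sub (w/2)
    rw [this]; ring_nf
  have hang1 : Real.pi * (2*(j:ℝ)-1)/(8*m) = u/2 := by rw [hu_def]; ring
  have hang2 : Real.pi * (2*((j:ℕ)+1:ℝ)-1)/(8*m) = v/2 := by rw [hv_def]; ring
  have hxj : A / Real.sin (Real.pi * (2*(j:ℝ)-1)/(8*m))^2 = 2*A*(1 - Real.cos u)⁻¹ := by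
    rw [hang1, hsin u]
    field_simp
  have hxj1 : A / Real.sin (Real.pi * (2*((j:ℕ)+1:ℝ)-1)/(8*m))^2
      = 2*A*(1 - Real.cos v)⁻¹ := by
    rw [hang2, hsin v]
    field_simp
  have hgap : 2*A*(1 - Real.cos v)⁻¹ + 1 ≤ 2*A*(1 - Real.cos u)⁻¹ := by
    have h1 : 2*A*(v-u) ≤ 2*A*((1 - Real.cos u)⁻¹ - (1 - Real.cos v)⁻¹) := by
      apply mul_le_mul_of_nonneg_left key (by positivity)
    have h2 : 1 ≤ 2*A*(v-u) := by
      rw [hvu]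
      have : (m:ℝ)/π * (π/m) ≤ A * (π/m) := by
        apply mul_le_mul_of_nonneg_right hApi (by positivity)
      have he : (m:ℝ)/π * (π/m) = 1 := by field_simp
      calc (1:ℝ) = (m:ℝ)/π * (π/m) := he.symm
        _ ≤ A * (π/m) := this
        _ = 2*A*(π/(2*m)) := by ring
    nlinarith
  have hxpos : 0 < 2*A*(1 - Real.cos v)⁻¹ := by positivity
  unfold rval
  rw [← Nat.cast_lt (α := ℝ)]
  push_cast
  rw [hxj, hxj1]
  calc (⌈2*A*(1 - Real.cos v)⁻¹⌉₊ : ℝ) < 2*A*(1 - Real.cos v)⁻¹ + 1 :=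
        Nat.ceil_lt_add_one hxpos.le
    _ ≤ 2*A*(1 - Real.cos u)⁻¹ := hgap
    _ ≤ (⌈2*A*(1 - Real.cos u)⁻¹⌉₊ : ℝ) := Nat.le_ceil _

open Real in
private lemma rpos' (m : ℕ) (hm : 1 ≤ m) (t s : ℝ) (j : ℕ) (hj : 1 ≤ j) (hjm : j ≤ m) :
    0 < rval m t s j := by
  have hpi := Real.pi_pos
  have hm1 : (1:ℝ) ≤ m := by exact_mod_cast hm
  have hj1 : (1:ℝ) ≤ j := by exact_mod_cast hj
  have hjm1 : (j:ℝ) ≤ m := by exact_mod_cast hjm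
  have hsin : 0 < Real.sin (Real.pi * (2*(j:ℝ)-1)/(8*m)) := by
    apply Real.sin_pos_of_pos_of_lt_pi
    · apply div_pos (by nlinarith) (by positivity)
    · rw [div_lt_iff₀ (by positivity)]
      nlinarith
  exact Nat.ceil_pos.mpr (div_pos (Kpos' m hm t s) (by positivity))

/-- the integers `r_1 > r_2 > ⋯ > r_m` are strictly decreasing; in particular
the `r_j`, and hence the sample points `s_j = t/r_j`, are pairwise distinct. -/
theorem stmt6 (m : ℕ) (hm : 1 ≤ m) (t s : ℝ) (ht : 0 < t) (hs : s ∈ Set.Ioo (0:ℝ) 1) :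
    (∀ j j' : ℕ, 1 ≤ j → j < j' → j' ≤ m → rval m t s j' < rval m t s j) ∧
    (∀ j ∈ Finset.Icc 1 m, ∀ j' ∈ Finset.Icc 1 m, j ≠ j' → rval m t s j ≠ rval m t s j') ∧
    (∀ j ∈ Finset.Icc 1 m, ∀ j' ∈ Finset.Icc 1 m, j ≠ j' → sval m t s j ≠ sval m t s j') := by
  have part1 : ∀ j j' : ℕ, 1 ≤ j → j < j' → j' ≤ m → rval m t s j' < rval m t s j := by
    intro j j' hj hlt
    have h1 : j + 1 ≤ j' := hlt
    induction j', h1 using Nat.le_induction with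
    | base =>
      intro h2
      exact rstep' m hm t s j hj h2
    | succ n hn ih =>
      intro h2
      have h3 : n ≤ m := by omega
      exact lt_trans (rstep' m hm t s n (by omega) h2) (ih (by omega) h3)
  have part2 : ∀ j ∈ Finset.Icc 1 m, ∀ j' ∈ Finset.Icc 1 m, j ≠ j' →
      rval m t s j ≠ rval m t s j' := by
    intro j hj j' hj' hne
    simp only [Finset.mem_Icc] at hj hj'
    rcases lt_or_gt_of_ne hne with h | h
    · exact (part1 j j' hj.1 h hj'.2).ne'
    · exact (part1 j' j hj'.1 h hj.2).ne
  refine ⟨part1, part2, ?_⟩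
  intro j hj j' hj' hne heq
  have hjm := Finset.mem_Icc.mp hj
  have hjm' := Finset.mem_Icc.mp hj'
  have hp : 0 < rval m t s j := rpos' m hm t s j hjm.1 hjm.2
  have hp' : 0 < rval m t s j' := rpos' m hm t s j' hjm'.1 hjm'.2
  have hpr : (0:ℝ) < (rval m t s j : ℝ) := by exact_mod_cast hp
  have hpr' : (0:ℝ) < (rval m t s j' : ℝ) := by exact_mod_cast hp'
  unfold sval at heq
  rw [div_eq_div_iff hpr.ne' hpr'.ne'] at heq
  have : (rval m t s j : ℝ) = (rval m t s j' : ℝ) :=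
    mul_left_cancel₀ ht.ne' heq.symm
  exact part2 j hj j' hj' hne (by exact_mod_cast this)
end

section
/- Let s ∈ (0,1/2) and let k ≥ 1 be an integer. Then |z/√(1−z²) − S_k(z)| ≤ s^{2k+1} for every real z with |z| ≤ s. Consequently, for every ε ∈ (0,1), if k ≥ log(1/ε)/(2·log(1/s)) then |z/√(1−z²) − S_k(z)| ≤ ε for all z ∈ [−s, s]. -/
/-- The Taylor coefficient `c_m = (2m)!/(4^m·(m!)²)` of `z/√(1−z²) = Σ_m c_m·z^{2m+1}`. -/
noncomputable def cm (m : ℕ) : ℝ :=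
  (Nat.factorial (2 * m) : ℝ) / (4 ^ m * (Nat.factorial m : ℝ) ^ 2)

/-- The order-`k` truncation `S_k(z) = Σ_{m=0}^{k−1} c_m·z^{2m+1}` of the series of `z/√(1−z²)`. -/
noncomputable def Sk (k : ℕ) (z : ℝ) : ℝ := ∑ m ∈ Finset.range k, cm m * z ^ (2 * m + 1)

noncomputable def a (m : ℕ) : ℝ := (Nat.centralBinom m : ℝ)

lemma a_rec (m : ℕ) : ((m:ℝ)+1) * a (m+1) = 2 * (2*m+1) * a m := by
  have := congrArg (fun n : ℕ => (n : ℝ)) (Nat.succ_mul_centralBinom_succ m)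
  push_cast at this
  simpa [a] using this

noncomputable def S (n : ℕ) : ℝ := ∑ i ∈ Finset.range (n+1), a i * a (n - i)

lemma claimA (m : ℕ) : ∑ i ∈ Finset.range (m+1), (2*(i:ℝ)+1) * a i * a (m - i)
    = ((m:ℝ)+1) * S m := by
  have h2 : ∑ i ∈ Finset.range (m+1), (2*(i:ℝ)+1) * a i * a (m - i)
      = ∑ i ∈ Finset.range (m+1), (2*((m:ℝ)-i)+1) * a (m - i) * a i := by
    rw [← Finset.sum_range_reflect (fun i => (2*(i:ℝ)+1) * a i * a (m - i)) (m+1)]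
    apply Finset.sum_congr rfl
    intro i hi
    have hi' : i ≤ m := Nat.lt_succ_iff.mp (Finset.mem_range.mp hi)
    have e1 : m + 1 - 1 - i = m - i := by omega
    have e2 : m - (m - i) = i := by omega
    rw [e1, e2, Nat.cast_sub hi']
  have key : 2 * ∑ i ∈ Finset.range (m+1), (2*(i:ℝ)+1) * a i * a (m - i)
      = (2*(m:ℝ)+2) * S m := by
    rw [two_mul]
    nth_rewrite 2 [h2]
    rw [← Finset.sum_add_distrib, S, Finset.mul_sum]
    exact Finset.sum_congr rfl fun i _ => by ring
  linarith

lemma claimB (n : ℕ) : 2 * ∑ i ∈ Finset.range (n+2), (i:ℝ) * a i * a (n+1 - i)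
    = ((n:ℝ)+1) * S (n+1) := by
  have h2 : ∑ i ∈ Finset.range (n+2), (i:ℝ) * a i * a (n+1 - i)
      = ∑ i ∈ Finset.range (n+2), ((n:ℝ)+1-i) * a i * a (n+1 - i) := by
    rw [← Finset.sum_range_reflect (fun i => (i:ℝ) * a i * a (n+1 - i)) (n+2)]
    apply Finset.sum_congr rfl
    intro i hi
    have hi' : i ≤ n+1 := Nat.lt_succ_iff.mp (Finset.mem_range.mp hi)
    have e1 : n + 2 - 1 - i = n + 1 - i := by omega
    have e2 : n + 1 - (n + 1 - i) = i := by omega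
    rw [e1, e2]
    rw [show ((n+1-i : ℕ) : ℝ) = ((n:ℝ)+1-i) by rw [Nat.cast_sub (by omega)]; push_cast; ring]
    ring
  rw [two_mul]
  nth_rewrite 2 [h2]
  rw [← Finset.sum_add_distrib, S, Finset.mul_sum]
  refine Finset.sum_congr rfl fun i _ => by push_cast; ring

lemma claimC (n : ℕ) : ∑ i ∈ Finset.range (n+2), (i:ℝ) * a i * a (n+1-i)
    = 2 * (((n:ℝ)+1) * S n) := by
  have h2 : ∑ j ∈ Finset.range (n+1), ((j:ℝ)+1) * a (j+1) * a (n-j)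
      = ∑ j ∈ Finset.range (n+1), 2 * ((2*(j:ℝ)+1) * a j * a (n - j)) := by
    apply Finset.sum_congr rfl
    intro j hj
    rw [← mul_assoc, a_rec j]
    ring
  rw [Finset.sum_range_succ' (fun i => (i:ℝ) * a i * a (n+1-i)) (n+1)]
  push_cast
  simp only [zero_mul, add_zero, Nat.succ_sub_succ, Nat.add_sub_cancel]
  rw [h2, ← Finset.mul_sum, claimA]

lemma conv (n : ℕ) : S n = 4 ^ n := by
  induction n with
  | zero => simp [S, a, Nat.centralBinom]
  | succ n ih =>
    have hB := claimB n
    have hC := claimC n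
    have h : ((n:ℝ)+1) * S (n+1) = ((n:ℝ)+1) * (4 * S n) := by
      rw [← hB, hC]; ring
    have := mul_left_cancel₀ (show ((n:ℝ)+1) ≠ 0 by positivity) h
    rw [this, ih]; ring

lemma cm_eq (m : ℕ) : cm m = a m / 4 ^ m := by
  have e : 2*m - m = m := by omega
  rw [cm, a, Nat.centralBinom, Nat.cast_choose ℝ (by omega : m ≤ 2*m), e]
  rw [div_div, sq]
  ring_nf

lemma a_nonneg (m : ℕ) : 0 ≤ a m := Nat.cast_nonneg _

lemma a_le (m : ℕ) : a m ≤ 4 ^ m := by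
  have h := conv m
  have h2 : a m * a 0 ≤ S m := by
    rw [S]
    have := Finset.single_le_sum (f := fun i => a i * a (m - i))
      (fun i _ => mul_nonneg (a_nonneg i) (a_nonneg (m-i)))
      (Finset.self_mem_range_succ m)
    simpa using this
  have ha0 : a 0 = 1 := by simp [a, Nat.centralBinom]
  rw [ha0, mul_one] at h2
  linarith [h.symm ▸ h2]

lemma cm_nonneg (m : ℕ) : 0 ≤ cm m := by
  rw [cm_eq]; exact div_nonneg (a_nonneg m) (by positivity)

lemma cm_le_one (m : ℕ) : cm m ≤ 1 := by
  rw [cm_eq, div_le_one (by positivity)]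
  exact a_le m

lemma cm_succ_le (m : ℕ) : cm (m+1) ≤ cm m := by
  have hrec := a_rec m
  have h4 : (0:ℝ) < 4 ^ m := by positivity
  have hm : (0:ℝ) < (m:ℝ) + 1 := by positivity
  rw [cm_eq, cm_eq, pow_succ, div_le_div_iff₀ (by positivity) h4]
  have ha1 : a (m+1) = 2 * (2*m+1) * a m / ((m:ℝ)+1) := by
    field_simp at hrec ⊢
    linarith
  rw [ha1]
  rw [div_mul_eq_mul_div, div_le_iff₀ hm]
  nlinarith [a_nonneg m, h4]

lemma cm_antitone : Antitone cm := antitone_nat_of_succ_le cm_succ_le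

lemma cm_le_half {m : ℕ} (hm : 1 ≤ m) : cm m ≤ 1/2 := by
  have := cm_antitone hm
  have h1 : cm 1 = 1/2 := by
    norm_num [cm, Nat.factorial]
  linarith

lemma summable_f {z : ℝ} (hz : |z| < 1) : Summable (fun m => cm m * z ^ (2*m+1)) := by
  apply Summable.of_norm_bounded (g := fun m => |z| * (|z|^2) ^ m)
  · exact (summable_geometric_of_lt_one (by positivity) (by nlinarith [abs_nonneg z])).mul_left _
  · intro m
    rw [norm_mul, norm_pow]
    calc ‖cm m‖ * ‖z‖ ^ (2*m+1) ≤ 1 * ‖z‖ ^ (2*m+1) := by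
          apply mul_le_mul_of_nonneg_right _ (by positivity)
          rw [Real.norm_eq_abs, abs_of_nonneg (cm_nonneg m)]
          exact cm_le_one m
      _ = |z| * (|z|^2) ^ m := by
          rw [Real.norm_eq_abs, one_mul, ← pow_mul]
          ring

lemma summable_g {t : ℝ} (ht : |t| < 1) : Summable (fun m => cm m * t ^ m) := by
  apply Summable.of_norm_bounded (g := fun m => |t| ^ m)
  · exact summable_geometric_of_lt_one (by positivity) (by simpa using ht)
  · intro m
    rw [norm_mul, norm_pow, Real.norm_eq_abs, Real.norm_eq_abs]
    calc |cm m| * |t| ^ m ≤ 1 * |t| ^ m := by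
          apply mul_le_mul_of_nonneg_right _ (by positivity)
          rw [abs_of_nonneg (cm_nonneg m)]
          exact cm_le_one m
      _ = |t| ^ m := one_mul _

lemma G_sq {t : ℝ} (ht0 : 0 ≤ t) (ht : t < 1) :
    (∑' m, cm m * t ^ m) * (∑' m, cm m * t ^ m) = (1 - t)⁻¹ := by
  have habs : |t| < 1 := by rw [abs_of_nonneg ht0]; exact ht
  have hnorm : Summable (fun m => ‖cm m * t ^ m‖) := (summable_g habs).abs
  rw [tsum_mul_tsum_eq_tsum_sum_range_of_summable_norm hnorm hnorm]
  have hinner : ∀ n : ℕ, ∑ k ∈ Finset.range (n+1), (cm k * t ^ k) * (cm (n-k) * t ^ (n-k)) = t ^ n := by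
    intro n
    have : ∀ k ∈ Finset.range (n+1), (cm k * t ^ k) * (cm (n-k) * t ^ (n-k))
        = (a k * a (n-k)) * (t ^ n / 4 ^ n) := by
      intro k hk
      have hkn : k ≤ n := Nat.lt_succ_iff.mp (Finset.mem_range.mp hk)
      have hpow : t ^ k * t ^ (n-k) = t ^ n := by
        rw [← pow_add]; congr 1; omega
      have hpow4 : (4:ℝ) ^ k * 4 ^ (n-k) = 4 ^ n := by
        rw [← pow_add]; congr 1; omega
      rw [cm_eq, cm_eq]
      field_simp
      rw [← hpow, ← hpow4]
      ring
    rw [Finset.sum_congr rfl this, ← Finset.sum_mul]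
    have : ∑ k ∈ Finset.range (n+1), a k * a (n-k) = 4 ^ n := conv n
    rw [this]
    field_simp
  calc ∑' n, ∑ k ∈ Finset.range (n+1), (cm k * t ^ k) * (cm (n-k) * t ^ (n-k))
      = ∑' n : ℕ, t ^ n := by exact tsum_congr hinner
    _ = (1 - t)⁻¹ := tsum_geometric_of_lt_one ht0 ht

lemma hasSum_main {z : ℝ} (hz : |z| < 1) :
    HasSum (fun m => cm m * z ^ (2*m+1)) (z / Real.sqrt (1 - z^2)) := by
  set t := z^2 with htdef
  have ht0 : 0 ≤ t := sq_nonneg z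
  have ht1 : t < 1 := by nlinarith [abs_nonneg z, sq_abs z]
  have htabs : |t| < 1 := by rw [abs_of_nonneg ht0]; exact ht1
  have hsum : HasSum (fun m => cm m * t ^ m) (∑' m, cm m * t ^ m) := (summable_g htabs).hasSum
  set G := ∑' m, cm m * t ^ m with hG
  have hG1 : 1 ≤ G := by
    have := Summable.le_tsum (summable_g htabs) 0 (fun j _ => mul_nonneg (cm_nonneg j) (pow_nonneg ht0 j))
    simpa [cm, Nat.factorial, hG] using this
  have hGsq : G * G = (1-t)⁻¹ := G_sq ht0 ht1
  have hGpos : 0 < G := by linarith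
  have hsqrt : Real.sqrt (1 - t) = G⁻¹ := by
    have hinv : G⁻¹ * G⁻¹ = 1 - t := by rw [← mul_inv, hGsq, inv_inv]
    rw [← hinv]
    exact Real.sqrt_mul_self (by positivity)
  have hzG : z / Real.sqrt (1 - t) = z * G := by
    rw [hsqrt]
    field_simp
  rw [hzG]
  have h2 := hsum.mul_left z
  have h3 : (fun m => z * (cm m * t ^ m)) = fun m => cm m * z ^ (2*m+1) := by
    funext m
    rw [htdef, ← pow_mul]
    ring
  rwa [h3] at h2

lemma part1 (s : ℝ) (hs : s ∈ Set.Ioo (0:ℝ) (1/2)) (k : ℕ) (hk : 1 ≤ k)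
    (z : ℝ) (hz : |z| ≤ s) : |z / Real.sqrt (1 - z ^ 2) -
      (∑ m ∈ Finset.range k, cm m * z ^ (2 * m + 1))| ≤ s ^ (2 * k + 1) := by
  obtain ⟨hs0, hs1⟩ := hs
  have hz1 : |z| < 1 := lt_of_le_of_lt hz (by linarith)
  have hf := hasSum_main hz1
  have hsum := hf.summable
  have hts := Summable.sum_add_tsum_nat_add k hsum
  have hdiff : z / Real.sqrt (1 - z^2) - ∑ m ∈ Finset.range k, cm m * z ^ (2 * m + 1)
      = ∑' m, cm (m+k) * z^(2*(m+k)+1) := by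
    rw [← hf.tsum_eq, ← hts]; ring
  have hs2 : s^2 < 1 := by nlinarith
  have hB : HasSum (fun m : ℕ => (1/2) * s^(2*k+1) * (s^2) ^ m)
      ((1/2) * s^(2*k+1) * (1 - s^2)⁻¹) :=
    (hasSum_geometric_of_lt_one (by positivity) hs2).mul_left _
  have hbound : ∀ m : ℕ, ‖cm (m+k) * z^(2*(m+k)+1)‖ ≤ (1/2) * s^(2*k+1) * (s^2) ^ m := by
    intro m
    rw [Real.norm_eq_abs, abs_mul, abs_of_nonneg (cm_nonneg _), abs_pow]
    have h1 : cm (m+k) ≤ 1/2 := cm_le_half (by omega)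
    have h2 : |z| ^ (2*(m+k)+1) ≤ s ^ (2*(m+k)+1) :=
      pow_le_pow_left₀ (abs_nonneg z) hz _
    have h3 : s ^ (2*(m+k)+1) = s^(2*k+1) * (s^2) ^ m := by
      rw [← pow_mul, ← pow_add]; congr 1; omega
    calc cm (m+k) * |z| ^ (2*(m+k)+1) ≤ (1/2) * s ^ (2*(m+k)+1) := by
          apply mul_le_mul h1 h2 (by positivity) (by norm_num)
      _ = (1/2) * s^(2*k+1) * (s^2) ^ m := by rw [h3]; ring
  rw [hdiff]
  calc |∑' m, cm (m+k) * z^(2*(m+k)+1)| ≤ (1/2) * s^(2*k+1) * (1 - s^2)⁻¹ :=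
        tsum_of_norm_bounded hB hbound
    _ ≤ s ^ (2*k+1) := by
        have h4 : (1 - s^2)⁻¹ ≤ 2 := by
          rw [inv_le_comm₀ (by nlinarith) (by norm_num)]
          nlinarith
        have h5 : (0:ℝ) ≤ s ^ (2*k+1) := by positivity
        nlinarith

private theorem stmt11' (s : ℝ) (hs : s ∈ Set.Ioo (0:ℝ) (1/2)) (k : ℕ) (hk : 1 ≤ k) :
    (∀ z : ℝ, |z| ≤ s → |z / Real.sqrt (1 - z ^ 2) -
      (∑ m ∈ Finset.range k, cm m * z ^ (2 * m + 1))| ≤ s ^ (2 * k + 1)) ∧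
    (∀ ε : ℝ, ε ∈ Set.Ioo (0:ℝ) 1 → Real.log (1 / ε) / (2 * Real.log (1 / s)) ≤ (k : ℝ) →
      ∀ z ∈ Set.Icc (-s) s, |z / Real.sqrt (1 - z ^ 2) -
        (∑ m ∈ Finset.range k, cm m * z ^ (2 * m + 1))| ≤ ε) := by
  obtain ⟨hs0, hs1⟩ := hs
  refine ⟨part1 s ⟨hs0, hs1⟩ k hk, ?_⟩
  intro ε hε hkc z hzI
  have hzabs : |z| ≤ s := abs_le.mpr ⟨hzI.1, hzI.2⟩
  have h1 := part1 s ⟨hs0, hs1⟩ k hk z hzabs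
  have hlogs : 0 < Real.log (1/s) := Real.log_pos ((one_lt_div hs0).mpr (by linarith))
  have h2 : Real.log (1/ε) ≤ (k:ℝ) * (2 * Real.log (1/s)) :=
    (div_le_iff₀ (by linarith)).mp hkc
  have h3 : Real.log (s ^ (2*k)) ≤ Real.log ε := by
    rw [Real.log_pow]
    rw [one_div, Real.log_inv, one_div, Real.log_inv] at h2
    push_cast
    nlinarith
  have h4 : s ^ (2*k) ≤ ε := by
    have := (Real.log_le_log_iff (by positivity) hε.1).mp h3
    exact this
  have h5 : s ^ (2*k+1) ≤ ε := by
    calc s ^ (2*k+1) = s ^ (2*k) * s := by rw [pow_succ]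
      _ ≤ ε * 1 := by
          apply mul_le_mul h4 (by linarith) (le_of_lt hs0) (le_of_lt hε.1)
      _ = ε := mul_one ε
  linarith

/-- for `s ∈ (0,1/2)` and an integer `k ≥ 1`, `|z/√(1−z²) − S_k(z)| ≤ s^{2k+1}`
for all real `|z| ≤ s`; consequently, for every `ε ∈ (0,1)`, if `k ≥ log(1/ε)/(2·log(1/s))`
then `|z/√(1−z²) − S_k(z)| ≤ ε` for all `z ∈ [−s, s]`. -/
theorem stmt11 (s : ℝ) (hs : s ∈ Set.Ioo (0:ℝ) (1/2)) (k : ℕ) (hk : 1 ≤ k) :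
    (∀ z : ℝ, |z| ≤ s → |z / Real.sqrt (1 - z ^ 2) - Sk k z| ≤ s ^ (2 * k + 1)) ∧
    (∀ ε : ℝ, ε ∈ Set.Ioo (0:ℝ) 1 → Real.log (1 / ε) / (2 * Real.log (1 / s)) ≤ (k : ℝ) →
      ∀ z ∈ Set.Icc (-s) s, |z / Real.sqrt (1 - z ^ 2) - Sk k z| ≤ ε) := by
  simp only [Sk]
  exact stmt11' s hs k hk
end

section
/- For every integer k ≥ 1 and every real z ∈ [−1,1], |S_k(z)| ≤ Σ_{m=0}^{k−1} c_m ≤ 1 + 2·√(k/π). -/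
lemma cm_pos (m : ℕ) : 0 < cm m := by
  unfold cm
  positivity

lemma W_eq_cm (n : ℕ) : Real.Wallis.W n = 1 / ((cm n) ^ 2 * (2 * n + 1)) := by
  rw [Real.Wallis.W_eq_factorial_ratio]
  unfold cm
  have h1 : (0:ℝ) < (Nat.factorial (2 * n) : ℝ) := by positivity
  have h2 : (0:ℝ) < (Nat.factorial n : ℝ) := by positivity
  have h4 : (4:ℝ) ^ n = 2 ^ (2 * n) := by
    rw [pow_mul]; norm_num
  rw [h4]
  field_simp
  ring_nf

lemma cm_sq_le (n : ℕ) (hn : 1 ≤ n) : (cm n) ^ 2 ≤ 1 / (Real.pi * n) := by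
  have hW := Real.Wallis.le_W n
  rw [W_eq_cm] at hW
  have hc := cm_pos n
  have hπ := Real.pi_pos
  have hn' : (1:ℝ) ≤ (n:ℝ) := by exact_mod_cast hn
  have h1 : (0:ℝ) < 2 * (n:ℝ) + 1 := by linarith
  have h2 : (0:ℝ) < 2 * (n:ℝ) + 2 := by linarith
  -- from le_W: (2n+1)/(2n+2) * (π/2) ≤ 1/(c² (2n+1))
  rw [div_mul_eq_mul_div, div_le_div_iff₀ h2 (by positivity)] at hW
  -- (2n+1) * (π/2) * (c² (2n+1)) ≤ 1 * (2n+2)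
  rw [le_div_iff₀ (by positivity)]
  nlinarith [hW, mul_nonneg hπ.le (sq_nonneg (cm n)), hn']

lemma cm_le (n : ℕ) (hn : 1 ≤ n) : cm n ≤ 1 / Real.sqrt (Real.pi * n) := by
  have h := cm_sq_le n hn
  have hc := (cm_pos n).le
  have hπ : (0:ℝ) < Real.pi * n := by
    have : (1:ℝ) ≤ (n:ℝ) := by exact_mod_cast hn
    nlinarith [Real.pi_pos]
  have h2 := Real.sqrt_le_sqrt h
  rw [Real.sqrt_sq hc] at h2
  refine h2.trans_eq ?_
  rw [one_div, one_div, Real.sqrt_inv]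

lemma sum_inv_sqrt (n : ℕ) :
    ∑ m ∈ Finset.range n, 1 / Real.sqrt (m + 1) ≤ 2 * Real.sqrt n := by
  induction n with
  | zero => simp
  | succ n ih =>
    rw [Finset.sum_range_succ]
    have h1 : (0:ℝ) ≤ (n:ℝ) := Nat.cast_nonneg n
    have h2 : (0:ℝ) < (n:ℝ) + 1 := by linarith
    have hs1 : Real.sqrt ((n:ℝ)) ≤ Real.sqrt ((n:ℝ)+1) := Real.sqrt_le_sqrt (by linarith)
    have hs2 : 0 < Real.sqrt ((n:ℝ)+1) := Real.sqrt_pos.mpr h2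
    have key : 1 / Real.sqrt ((n:ℝ)+1) ≤ 2 * Real.sqrt ((n:ℝ)+1) - 2 * Real.sqrt (n:ℝ) := by
      rw [div_le_iff₀ hs2]
      have hsq : Real.sqrt ((n:ℝ)+1) * Real.sqrt ((n:ℝ)+1) = (n:ℝ)+1 :=
        Real.mul_self_sqrt h2.le
      have hsq2 : Real.sqrt (n:ℝ) * Real.sqrt (n:ℝ) = (n:ℝ) := Real.mul_self_sqrt h1
      nlinarith [mul_le_mul_of_nonneg_right hs1 hs2.le]
    push_cast
    linarith [ih]

/-- for every integer `k ≥ 1` and every real `z ∈ [−1,1]`,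
`|S_k(z)| ≤ Σ_{m=0}^{k−1} c_m ≤ 1 + 2·√(k/π)`. -/
theorem stmt12 (k : ℕ) (hk : 1 ≤ k) (z : ℝ) (hz : z ∈ Set.Icc (-1:ℝ) 1) :
    |Sk k z| ≤ ∑ m ∈ Finset.range k, cm m ∧
    ∑ m ∈ Finset.range k, cm m ≤ 1 + 2 * Real.sqrt ((k : ℝ) / Real.pi) := by
  have hzabs : |z| ≤ 1 := abs_le.mpr ⟨hz.1, hz.2⟩
  constructor
  · unfold Sk
    refine (Finset.abs_sum_le_sum_abs _ _).trans (Finset.sum_le_sum fun m _ => ?_)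
    rw [abs_mul, abs_pow, abs_of_pos (cm_pos m)]
    calc cm m * |z| ^ (2 * m + 1) ≤ cm m * 1 := by
          exact mul_le_mul_of_nonneg_left (pow_le_one₀ (abs_nonneg z) hzabs) (cm_pos m).le
      _ = cm m := mul_one _
  · obtain ⟨j, rfl⟩ : ∃ j, k = j + 1 := ⟨k - 1, (Nat.succ_pred_eq_of_pos hk).symm⟩
    rw [Finset.sum_range_succ']
    have hc0 : cm 0 = 1 := by unfold cm; simp
    have hπ := Real.pi_pos
    have hsπ : 0 < Real.sqrt Real.pi := Real.sqrt_pos.mpr hπ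
    have step : ∑ m ∈ Finset.range j, cm (m + 1) ≤
        (1 / Real.sqrt Real.pi) * ∑ m ∈ Finset.range j, 1 / Real.sqrt (m + 1) := by
      rw [Finset.mul_sum]
      refine Finset.sum_le_sum fun m _ => ?_
      have := cm_le (m + 1) (Nat.le_add_left 1 m)
      rw [Real.sqrt_mul hπ.le] at this
      calc cm (m+1) ≤ 1 / (Real.sqrt Real.pi * Real.sqrt ((m:ℝ)+1)) := by push_cast at this ⊢; exact this
        _ = 1 / Real.sqrt Real.pi * (1 / Real.sqrt ((m:ℝ)+1)) := by
              rw [div_mul_div_comm, one_mul]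
    have h2 : (1 / Real.sqrt Real.pi) * ∑ m ∈ Finset.range j, 1 / Real.sqrt (m + 1)
        ≤ (1 / Real.sqrt Real.pi) * (2 * Real.sqrt j) :=
      mul_le_mul_of_nonneg_left (sum_inv_sqrt j) (by positivity)
    have h3 : (1 / Real.sqrt Real.pi) * (2 * Real.sqrt j)
        ≤ 2 * Real.sqrt (((j:ℝ)+1) / Real.pi) := by
      rw [Real.sqrt_div (by positivity : (0:ℝ) ≤ (j:ℝ)+1)]
      have hj : Real.sqrt (j:ℝ) ≤ Real.sqrt ((j:ℝ)+1) := Real.sqrt_le_sqrt (by linarith [Nat.cast_nonneg (α := ℝ) j])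
      rw [div_mul_eq_mul_div, one_mul, div_le_iff₀ hsπ, mul_comm (2 * (Real.sqrt ((j:ℝ)+1) / Real.sqrt Real.pi)) (Real.sqrt Real.pi), mul_comm 2 (Real.sqrt ((j:ℝ)+1) / Real.sqrt Real.pi), ← mul_assoc, mul_div_cancel₀ _ hsπ.ne']
      nlinarith
    have : ((j:ℝ)+1) = ((j+1 : ℕ) : ℝ) := by push_cast; ring
    rw [this] at h3
    rw [hc0]
    linarith
end

section
/- For every integer m ≥ 1, the normalized central binomial coefficient satisfies (2m)! / (4^m·(m!)²) ≤ 1/√(π·m); equivalently, binom(2m, m) ≤ 4^m / √(π·m). -/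
open Stirling Real Filter

lemma sqrtpi_le_stirlingSeq (n : ℕ) (hn : 1 ≤ n) : Real.sqrt Real.pi ≤ stirlingSeq n := by
  obtain ⟨k, rfl⟩ := Nat.exists_eq_add_of_le hn
  have htend : Tendsto (stirlingSeq ∘ Nat.succ) atTop (nhds (Real.sqrt Real.pi)) :=
    tendsto_stirlingSeq_sqrt_pi.comp (tendsto_add_atTop_nat 1)
  have := stirlingSeq'_antitone.le_of_tendsto htend k
  simpa [Function.comp, Nat.add_comm] using this

lemma stirling_anti (a b : ℕ) (ha : 1 ≤ a) (hab : a ≤ b) : stirlingSeq b ≤ stirlingSeq a := by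
  obtain ⟨i, rfl⟩ := Nat.exists_eq_add_of_le ha
  obtain ⟨j, rfl⟩ := Nat.exists_eq_add_of_le hab
  have := stirlingSeq'_antitone (show i ≤ i + j by omega)
  have h := this
  simp only [Function.comp, Nat.succ_eq_add_one] at h
  rw [show 1 + i + j = i + j + 1 by omega, show 1 + i = i + 1 by omega]
  exact h

/-- for every integer `m ≥ 1`, the normalized central binomial coefficient
satisfies `(2m)!/(4^m·(m!)²) ≤ 1/√(π·m)`; equivalently, `binom(2m,m) ≤ 4^m/√(π·m)`. -/
theorem stmt13 (m : ℕ) (hm : 1 ≤ m) :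
    (Nat.factorial (2 * m) : ℝ) / (4 ^ m * (Nat.factorial m : ℝ) ^ 2)
        ≤ 1 / Real.sqrt (Real.pi * m) ∧
    (Nat.choose (2 * m) m : ℝ) ≤ 4 ^ m / Real.sqrt (Real.pi * m) := by
  have hm0 : (0:ℝ) < m := by exact_mod_cast hm
  set s1 := stirlingSeq m with hs1
  set s2 := stirlingSeq (2 * m) with hs2
  have hs1pos : 0 < s1 := by
    obtain ⟨k, rfl⟩ := Nat.exists_eq_add_of_le hm
    simpa [hs1, Nat.add_comm] using stirlingSeq'_pos k
  have hs2pos : 0 < s2 := by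
    have h2m : 1 ≤ 2 * m := by omega
    obtain ⟨k, hk⟩ := Nat.exists_eq_add_of_le h2m
    rw [hs2, hk, Nat.add_comm]
    exact stirlingSeq'_pos k
  have hpi1 : Real.sqrt Real.pi ≤ s1 := sqrtpi_le_stirlingSeq m hm
  have hmono : s2 ≤ s1 := stirling_anti m (2 * m) hm (by omega)
  -- key: s2 * √π ≤ s1 ^ 2
  have hkey : s2 * Real.sqrt Real.pi ≤ s1 ^ 2 := by
    nlinarith [Real.sqrt_nonneg Real.pi, mul_le_mul hmono hpi1 (Real.sqrt_nonneg _) hs1pos.le]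
  have hepos : (0:ℝ) < Real.exp 1 := Real.exp_pos 1
  have hfac1 : (Nat.factorial m : ℝ) = s1 * (Real.sqrt (2 * m) * ((m : ℝ) / Real.exp 1) ^ m) := by
    rw [hs1, stirlingSeq, div_mul_cancel₀]
    positivity
  have hfac2 : (Nat.factorial (2 * m) : ℝ)
      = s2 * (Real.sqrt (2 * ((2 * m : ℕ) : ℝ)) * (((2 * m : ℕ) : ℝ) / Real.exp 1) ^ (2 * m)) := by
    rw [hs2, stirlingSeq, div_mul_cancel₀]
    have : (0:ℝ) < ((2 * m : ℕ) : ℝ) := by exact_mod_cast (by omega : 0 < 2 * m)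
    positivity
  have hcast : ((2 * m : ℕ) : ℝ) = 2 * (m : ℝ) := by push_cast; ring
  rw [hcast] at hfac2
  set q := Real.sqrt (m : ℝ) with hq
  have hqpos : 0 < q := Real.sqrt_pos.mpr hm0
  have hqsq : q ^ 2 = (m : ℝ) := Real.sq_sqrt hm0.le
  have h4m : Real.sqrt (2 * (2 * (m:ℝ))) = 2 * q := by
    rw [show (2 * (2 * (m:ℝ))) = 2^2 * m by ring,
      Real.sqrt_mul (by positivity), Real.sqrt_sq (by norm_num)]
  have h2m : Real.sqrt (2 * (m:ℝ)) ^ 2 = 2 * m := Real.sq_sqrt (by positivity)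
  have hpim : Real.sqrt (Real.pi * m) = Real.sqrt Real.pi * q :=
    Real.sqrt_mul Real.pi_pos.le _
  have hpow : ((2 * (m:ℝ)) / Real.exp 1) ^ (2 * m) = 4 ^ m * (((m:ℝ) / Real.exp 1) ^ m) ^ 2 := by
    rw [show (2 * (m:ℝ)) / Real.exp 1 = 2 * ((m:ℝ) / Real.exp 1) by ring, mul_pow]
    congr 1
    · rw [pow_mul]; norm_num
    · rw [mul_comm 2 m, pow_mul]
  have hpip : 0 < Real.sqrt (Real.pi * (m:ℝ)) := by rw [hpim]; positivity
  have first : (Nat.factorial (2 * m) : ℝ) / (4 ^ m * (Nat.factorial m : ℝ) ^ 2)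
      ≤ 1 / Real.sqrt (Real.pi * m) := by
    rw [div_le_div_iff₀ (by positivity) hpip, hfac1, hfac2, h4m, hpim, hpow]
    have expand : s2 * (2 * q * (4 ^ m * ((↑m / Real.exp 1) ^ m) ^ 2)) * (Real.sqrt Real.pi * q)
        = (s2 * Real.sqrt Real.pi) * (2 * q ^ 2 * (4 ^ m * ((↑m / Real.exp 1) ^ m) ^ 2)) := by
      ring
    rw [expand, hqsq]
    have expand2 : (1:ℝ) * (4 ^ m * (s1 * (Real.sqrt (2 * ↑m) * (↑m / Real.exp 1) ^ m)) ^ 2)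
        = s1 ^ 2 * (Real.sqrt (2 * ↑m) ^ 2 * (4 ^ m * ((↑m / Real.exp 1) ^ m) ^ 2)) := by
      ring
    rw [expand2, h2m]
    exact mul_le_mul_of_nonneg_right hkey (by positivity)
  refine ⟨first, ?_⟩
  have hcb : (Nat.choose (2 * m) m : ℝ)
      = (Nat.factorial (2 * m) : ℝ) / (Nat.factorial m : ℝ) ^ 2 := by
    have h := Nat.choose_mul_factorial_mul_factorial (show m ≤ 2 * m by omega)
    rw [show (2 * m - m) = m from by omega] at h
    have h' : ((Nat.choose (2 * m) m : ℕ) : ℝ) * (Nat.factorial m : ℝ) ^ 2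
        = (Nat.factorial (2 * m) : ℝ) := by
      push_cast [← h]; ring
    have hfm : ((Nat.factorial m : ℝ)) ^ 2 ≠ 0 := by positivity
    field_simp [← h']
    exact h'
  rw [hcb]
  rw [div_le_div_iff₀ (by positivity) hpip] at first ⊢
  nlinarith [first]
end

section
/- There exist constants C_1, C_2 > 0 depending only on h, J, g, α and k (and not on n) such that for every integer n ≥ 3, C_1·n ≤ α_comm^{(2k+1)} ≤ C_2·n. -/
/-- The spectral (ℓ²-operator) norm of a complex matrix. -/
noncomputable def specNorm {m n : Type*} [Fintype m] [Fintype n] [DecidableEq n]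
    (A : Matrix m n ℂ) : ℝ :=
  ‖LinearMap.toContinuousLinearMap (Matrix.toEuclideanLin A)‖

/-- The Pauli `Z` operator acting on the `i`-th factor of the `n`-qubit space
`(ℂ²)^{⊗n} ≅ ℂ^{2^n}` (identified with `ℂ^{Fin n → Fin 2}`), identity elsewhere. -/
def qubitZ (n : ℕ) (i : Fin n) : Matrix (Fin n → Fin 2) (Fin n → Fin 2) ℂ :=
  Matrix.diagonal fun x => if x i = 0 then 1 else -1

/-- The Pauli `X` operator acting on the `i`-th factor of the `n`-qubit space, identity
elsewhere: it flips the `i`-th bit. -/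
def qubitX (n : ℕ) (i : Fin n) : Matrix (Fin n → Fin 2) (Fin n → Fin 2) ℂ :=
  Matrix.of fun x y => if y = Function.update x i (x i + 1) then 1 else 0
/-- The cyclic successor of a site: site `n+1` means site `1`. -/
def nextSite {n : ℕ} (i : Fin n) : Fin n :=
  ⟨(i.val + 1) % n, Nat.mod_lt _ (Nat.lt_of_le_of_lt (Nat.zero_le _) i.isLt)⟩

/-- Index set for the family `S`: the terms `h·Z_i`, the terms `J·X_i·X_{i+1}`, and the
terms `(g/n)·|i−j|^{−α}·Z_i·Z_j` for `i < j` (counted with multiplicity). -/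
abbrev SIdx (n : ℕ) := Fin n ⊕ Fin n ⊕ {p : Fin n × Fin n // p.1 < p.2}

/-- The member of the family `S` with the given index. -/
noncomputable def SOp (n : ℕ) (h J g α : ℝ) :
    SIdx n → Matrix (Fin n → Fin 2) (Fin n → Fin 2) ℂ
  | Sum.inl i => (h : ℂ) • qubitZ n i
  | Sum.inr (Sum.inl i) => (J : ℂ) • (qubitX n i * qubitX n (nextSite i))
  | Sum.inr (Sum.inr p) =>
      ((g / n * |((p.val.1 : ℕ) : ℝ) - ((p.val.2 : ℕ) : ℝ)| ^ (-α) : ℝ) : ℂ) •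
        (qubitZ n p.val.1 * qubitZ n p.val.2)

/-- The nested commutator `[A_1,[A_2,[…,[A_r, B]…]]]` of a list `[A_1,…,A_r]` applied to `B`. -/
noncomputable def nestedComm {ι : Type*} [Fintype ι] [DecidableEq ι]
    (l : List (Matrix ι ι ℂ)) (B : Matrix ι ι ℂ) : Matrix ι ι ℂ :=
  l.foldr (fun A acc => A * acc - acc * A) B

/-- `α_comm^{(2k+1)} = Σ` over all ordered `(2k+1)`-tuples `(S_1,…,S_{2k+1})` of members of
the family `S` of the spectral norm of `[S_1,[S_2,[…,[S_{2k}, S_{2k+1}]…]]]`. -/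
noncomputable def alphaComm (n : ℕ) (h J g α : ℝ) (k : ℕ) : ℝ :=
  ∑ f : Fin (2 * k + 1) → SIdx n,
    specNorm (nestedComm
      ((List.finRange (2 * k)).map fun j => SOp n h J g α (f j.castSucc))
      (SOp n h J g α (f (Fin.last (2 * k)))))


/-! ### Auxiliary development -/

section Stmt15Aux

open Finset

abbrev Vq (n : ℕ) := Fin n → Fin 2
abbrev PPq (n : ℕ) := (Vq n → ℂ) × Vq n

/-- Generalized signed-permutation matrix: entry `(x, x+t)` is `φ x`, all others zero. -/
noncomputable def Wm {n : ℕ} (φ : Vq n → ℂ) (t : Vq n) : Matrix (Vq n) (Vq n) ℂ :=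
  Matrix.of fun x y => if y = x + t then φ x else 0

theorem Wm_mul {n : ℕ} (φ ψ : Vq n → ℂ) (s t : Vq n) :
    Wm φ s * Wm ψ t = Wm (fun x => φ x * ψ (x + s)) (s + t) := by
  ext x z
  simp only [Wm, Matrix.mul_apply, Matrix.of_apply, ite_mul, zero_mul]
  rw [Finset.sum_ite_eq' Finset.univ (x + s) (fun y => φ x * if z = y + t then ψ y else 0)]
  simp [add_assoc]

theorem Wm_mulVec {n : ℕ} (φ : Vq n → ℂ) (t : Vq n) (w : Vq n → ℂ) :
    Matrix.mulVec (Wm φ t) w = fun x => φ x * w (x + t) := by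
  funext x
  simp only [Matrix.mulVec, dotProduct, Wm, Matrix.of_apply, ite_mul, zero_mul]
  rw [Finset.sum_ite_eq' Finset.univ (x + t) (fun y => φ x * w y)]
  simp

/-- The commutator data at the level of pairs `(φ, t)`. -/
def pcomm {n : ℕ} (p q : PPq n) : PPq n :=
  (fun x => p.1 x * q.1 (x + p.2) - q.1 x * p.1 (x + q.2), p.2 + q.2)

theorem Wm_comm {n : ℕ} (p q : PPq n) :
    Wm p.1 p.2 * Wm q.1 q.2 - Wm q.1 q.2 * Wm p.1 p.2
      = Wm (pcomm p q).1 (pcomm p q).2 := by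
  rw [Wm_mul, Wm_mul, add_comm q.2 p.2]
  ext x y
  simp only [Wm, pcomm, Matrix.sub_apply, Matrix.of_apply]
  by_cases hy : y = x + (p.2 + q.2) <;> simp [hy]

theorem specNorm_Wm_le {n : ℕ} {φ : Vq n → ℂ} {t : Vq n} {c : ℝ} (hc : 0 ≤ c)
    (hφ : ∀ x, ‖φ x‖ ≤ c) : specNorm (Wm φ t) ≤ c := by
  apply ContinuousLinearMap.opNorm_le_bound _ hc
  intro v
  rw [LinearMap.coe_toContinuousLinearMap']
  rw [EuclideanSpace.norm_eq, EuclideanSpace.norm_eq]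
  have hv : ∀ x, (Matrix.toEuclideanLin (Wm φ t) v) x = φ x * v (x + t) := by
    intro x
    have h0 : (Matrix.toEuclideanLin (Wm φ t) v) x
        = (Matrix.mulVec (Wm φ t) (fun y => v y)) x := rfl
    rw [h0, Wm_mulVec]
  have key : ∑ x, ‖(Matrix.toEuclideanLin (Wm φ t) v) x‖ ^ 2
      ≤ c ^ 2 * ∑ x, ‖v x‖ ^ 2 := by
    have h1 : ∑ x, ‖v x‖ ^ 2 = ∑ x : Vq n, ‖v (x + t)‖ ^ 2 :=
      (Fintype.sum_equiv (Equiv.addRight t) _ _ (fun x => rfl)).symm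
    rw [h1, Finset.mul_sum]
    apply Finset.sum_le_sum
    intro x _
    rw [hv x, norm_mul, mul_pow]
    apply mul_le_mul_of_nonneg_right _ (by positivity)
    exact pow_le_pow_left₀ (norm_nonneg _) (hφ x) 2
  calc Real.sqrt (∑ x, ‖(Matrix.toEuclideanLin (Wm φ t) v) x‖ ^ 2)
      ≤ Real.sqrt (c ^ 2 * ∑ x, ‖v x‖ ^ 2) := Real.sqrt_le_sqrt key
    _ = c * Real.sqrt (∑ x, ‖v x‖ ^ 2) := by
        rw [Real.sqrt_mul (by positivity), Real.sqrt_sq hc]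

theorem le_specNorm_Wm {n : ℕ} (φ : Vq n → ℂ) (t : Vq n) (x₀ : Vq n) :
    ‖φ x₀‖ ≤ specNorm (Wm φ t) := by
  have h1 := ContinuousLinearMap.le_opNorm
    (LinearMap.toContinuousLinearMap (Matrix.toEuclideanLin (Wm φ t)))
    (EuclideanSpace.single (x₀ + t) 1)
  rw [EuclideanSpace.norm_single, norm_one, mul_one] at h1
  refine le_trans ?_ h1
  rw [LinearMap.coe_toContinuousLinearMap']
  set w := Matrix.toEuclideanLin (Wm φ t) (EuclideanSpace.single (x₀ + t) 1) with hw
  have hx : w x₀ = φ x₀ := by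
    have h0 : w x₀
        = (Matrix.mulVec (Wm φ t) (fun y => EuclideanSpace.single (x₀ + t) (1:ℂ) y)) x₀ := rfl
    rw [h0, Wm_mulVec]
    simp [EuclideanSpace.single_apply]
  calc ‖φ x₀‖ = ‖w x₀‖ := by rw [hx]
    _ ≤ ‖w‖ := by
        rw [EuclideanSpace.norm_eq]
        rw [show ‖w x₀‖ = Real.sqrt (‖w x₀‖ ^ 2) by rw [Real.sqrt_sq (norm_nonneg _)]]
        apply Real.sqrt_le_sqrt
        exact Finset.single_le_sum (f := fun x => ‖w x‖ ^ 2) (fun i _ => by positivity)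
          (Finset.mem_univ x₀)

/-! #### The sup norm of the symbol -/

noncomputable def nsup {n : ℕ} (φ : Vq n → ℂ) : ℝ :=
  Finset.univ.sup' Finset.univ_nonempty fun x => ‖φ x‖

theorem le_nsup {n : ℕ} (φ : Vq n → ℂ) (x : Vq n) : ‖φ x‖ ≤ nsup φ :=
  Finset.le_sup' (f := fun x => ‖φ x‖) (Finset.mem_univ x)

theorem nsup_le {n : ℕ} {φ : Vq n → ℂ} {c : ℝ} (hb : ∀ x, ‖φ x‖ ≤ c) : nsup φ ≤ c :=
  Finset.sup'_le _ _ fun x _ => hb x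

theorem nsup_nonneg {n : ℕ} (φ : Vq n → ℂ) : 0 ≤ nsup φ := by
  obtain ⟨x⟩ : Nonempty (Vq n) := inferInstance
  exact le_trans (norm_nonneg (φ x)) (le_nsup φ x)

theorem nsup_zero_fun {n : ℕ} {φ : Vq n → ℂ} (hφ : φ = fun _ => 0) : nsup φ = 0 :=
  le_antisymm (nsup_le fun x => by simp [hφ]) (nsup_nonneg _)

theorem nsup_pcomm_le {n : ℕ} (p q : PPq n) :
    nsup (pcomm p q).1 ≤ 2 * nsup p.1 * nsup q.1 := by
  apply nsup_le
  intro x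
  calc ‖p.1 x * q.1 (x + p.2) - q.1 x * p.1 (x + q.2)‖
      ≤ ‖p.1 x * q.1 (x + p.2)‖ + ‖q.1 x * p.1 (x + q.2)‖ := norm_sub_le _ _
    _ ≤ nsup p.1 * nsup q.1 + nsup q.1 * nsup p.1 := by
        rw [norm_mul, norm_mul]
        gcongr <;> first
          | exact le_nsup _ _
          | exact nsup_nonneg _
    _ = 2 * nsup p.1 * nsup q.1 := by ring

/-! #### Supports -/

def DepOn {n : ℕ} (φ : Vq n → ℂ) (T : Finset (Fin n)) : Prop :=
  ∀ x y : Vq n, (∀ i ∈ T, x i = y i) → φ x = φ y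

def SuppIn {n : ℕ} (p : PPq n) (T : Finset (Fin n)) : Prop :=
  DepOn p.1 T ∧ ∀ i ∉ T, p.2 i = 0

theorem SuppIn.mono {n : ℕ} {p : PPq n} {A B : Finset (Fin n)} (hp : SuppIn p A)
    (hAB : A ⊆ B) : SuppIn p B :=
  ⟨fun x y hxy => hp.1 x y fun i hi => hxy i (hAB hi),
   fun i hi => hp.2 i fun hm => hi (hAB hm)⟩

theorem SuppIn.pcomm {n : ℕ} {p q : PPq n} {A B : Finset (Fin n)} (hp : SuppIn p A)
    (hq : SuppIn q B) : SuppIn (pcomm p q) (A ∪ B) := by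
  constructor
  · intro x y hxy
    have hA : ∀ i ∈ A, x i = y i := fun i hi => hxy i (Finset.mem_union_left _ hi)
    have hB : ∀ i ∈ B, x i = y i := fun i hi => hxy i (Finset.mem_union_right _ hi)
    show _ - _ = _ - _
    rw [hp.1 x y hA, hq.1 x y hB,
      hq.1 (x + p.2) (y + p.2) (fun i hi => by simp [hB i hi]),
      hp.1 (x + q.2) (y + q.2) (fun i hi => by simp [hA i hi])]
  · intro i hi
    have hiA : i ∉ A := fun hm => hi (Finset.mem_union_left _ hm)
    have hiB : i ∉ B := fun hm => hi (Finset.mem_union_right _ hm)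
    show p.2 i + q.2 i = 0
    rw [hp.2 i hiA, hq.2 i hiB, add_zero]

theorem pcomm_eq_zero {n : ℕ} {p q : PPq n} {A B : Finset (Fin n)} (hp : SuppIn p A)
    (hq : SuppIn q B) (hd : ∀ i, i ∈ A → i ∉ B) : (pcomm p q).1 = fun _ => 0 := by
  funext x
  show p.1 x * q.1 (x + p.2) - q.1 x * p.1 (x + q.2) = 0
  have h1 : q.1 (x + p.2) = q.1 x := by
    apply hq.1
    intro i hi
    have h0 : p.2 i = 0 := hp.2 i fun hm => hd i hm hi
    simp [h0]
  have h2 : p.1 (x + q.2) = p.1 x := by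
    apply hp.1
    intro i hi
    have h0 : q.2 i = 0 := hq.2 i fun hm => hd i hi hm
    simp [h0]
  rw [h1, h2, mul_comm, sub_self]

/-! #### The family in symbol form -/

def dZ {n : ℕ} (i : Fin n) (x : Vq n) : ℂ := if x i = 0 then 1 else -1

theorem norm_dZ {n : ℕ} (i : Fin n) (x : Vq n) : ‖dZ i x‖ = 1 := by
  unfold dZ; split <;> simp

theorem qubitZ_eq {n : ℕ} (i : Fin n) : qubitZ n i = Wm (dZ i) 0 := by
  ext x y
  by_cases hxy : y = x
  · subst hxy; simp [qubitZ, Wm, dZ, Matrix.diagonal_apply]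
  · simp [qubitZ, Wm, dZ, Matrix.diagonal_apply, hxy, Ne.symm hxy]

theorem qubitX_eq {n : ℕ} (i : Fin n) : qubitX n i = Wm (fun _ => 1) (Pi.single i 1) := by
  ext x y
  simp only [qubitX, Wm, Matrix.of_apply]
  have h0 : Function.update x i (x i + 1) = x + Pi.single i 1 := by
    funext j
    by_cases hj : j = i
    · subst hj; simp
    · simp [Function.update_of_ne hj, Pi.single_eq_of_ne hj]
  rw [h0]

theorem smul_Wm {n : ℕ} (c : ℂ) (φ : Vq n → ℂ) (t : Vq n) :
    c • Wm φ t = Wm (fun x => c * φ x) t := by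
  ext x y
  simp only [Wm, Matrix.smul_apply, Matrix.of_apply, smul_eq_mul]
  split <;> simp

noncomputable def pS (n : ℕ) (h J g α : ℝ) : SIdx n → PPq n
  | Sum.inl i => (fun x => (h : ℂ) * dZ i x, 0)
  | Sum.inr (Sum.inl i) => (fun _ => (J : ℂ), Pi.single i 1 + Pi.single (nextSite i) 1)
  | Sum.inr (Sum.inr p) =>
      (fun x => ((g / n * |((p.val.1 : ℕ) : ℝ) - ((p.val.2 : ℕ) : ℝ)| ^ (-α) : ℝ) : ℂ)
        * (dZ p.val.1 x * dZ p.val.2 x), 0)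

theorem SOp_eq (n : ℕ) (h J g α : ℝ) (s : SIdx n) :
    SOp n h J g α s = Wm (pS n h J g α s).1 (pS n h J g α s).2 := by
  match s with
  | Sum.inl i => rw [SOp, qubitZ_eq, smul_Wm]; rfl
  | Sum.inr (Sum.inl i) =>
      rw [SOp, qubitX_eq, qubitX_eq, Wm_mul, smul_Wm]
      simp only [pS, mul_one]
  | Sum.inr (Sum.inr p) =>
      rw [SOp, qubitZ_eq, qubitZ_eq, Wm_mul, smul_Wm]
      simp only [pS, add_zero]

def suppS {n : ℕ} : SIdx n → Finset (Fin n)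
  | Sum.inl i => {i}
  | Sum.inr (Sum.inl i) => {i, nextSite i}
  | Sum.inr (Sum.inr p) => {p.val.1, p.val.2}

noncomputable def cbound (n : ℕ) (h J g α : ℝ) : SIdx n → ℝ
  | Sum.inl _ => h
  | Sum.inr (Sum.inl _) => J
  | Sum.inr (Sum.inr p) => g / n * |((p.val.1 : ℕ) : ℝ) - ((p.val.2 : ℕ) : ℝ)| ^ (-α)

theorem suppS_card_le {n : ℕ} (s : SIdx n) : (suppS s).card ≤ 2 := by
  match s with
  | Sum.inl i => simp [suppS]
  | Sum.inr (Sum.inl i) => exact le_trans (Finset.card_insert_le _ _) (by simp)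
  | Sum.inr (Sum.inr p) => exact le_trans (Finset.card_insert_le _ _) (by simp)

theorem cbound_nonneg {n : ℕ} (h J g α : ℝ) (hh : 0 ≤ h) (hJ : 0 ≤ J) (hg : 0 ≤ g)
    (s : SIdx n) : 0 ≤ cbound n h J g α s := by
  match s with
  | Sum.inl i => exact hh
  | Sum.inr (Sum.inl i) => exact hJ
  | Sum.inr (Sum.inr p) =>
      have h1 : (0:ℝ) ≤ g / n := by positivity
      exact mul_nonneg h1 (Real.rpow_nonneg (abs_nonneg _) _)

theorem pS_norm_le {n : ℕ} (h J g α : ℝ) (hh : 0 ≤ h) (hJ : 0 ≤ J) (hg : 0 ≤ g)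
    (s : SIdx n) : ∀ x, ‖(pS n h J g α s).1 x‖ ≤ cbound n h J g α s := by
  intro x
  match s with
  | Sum.inl i =>
      show ‖(h : ℂ) * dZ i x‖ ≤ h
      rw [norm_mul, norm_dZ, mul_one, Complex.norm_real, Real.norm_eq_abs, abs_of_nonneg hh]
  | Sum.inr (Sum.inl i) =>
      show ‖(J : ℂ)‖ ≤ J
      rw [Complex.norm_real, Real.norm_eq_abs, abs_of_nonneg hJ]
  | Sum.inr (Sum.inr p) =>
      show ‖_ * (dZ p.val.1 x * dZ p.val.2 x)‖ ≤ cbound n h J g α (Sum.inr (Sum.inr p))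
      simp only [cbound]
      rw [norm_mul, norm_mul, norm_dZ, norm_dZ, mul_one, mul_one, Complex.norm_real, Real.norm_eq_abs]
      rw [abs_of_nonneg (mul_nonneg (by positivity) (Real.rpow_nonneg (abs_nonneg _) _))]

theorem nsup_pS_le {n : ℕ} (h J g α : ℝ) (hh : 0 ≤ h) (hJ : 0 ≤ J) (hg : 0 ≤ g)
    (s : SIdx n) : nsup (pS n h J g α s).1 ≤ cbound n h J g α s :=
  nsup_le (pS_norm_le h J g α hh hJ hg s)

theorem suppIn_pS {n : ℕ} (h J g α : ℝ) (s : SIdx n) :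
    SuppIn (pS n h J g α s) (suppS s) := by
  match s with
  | Sum.inl i =>
      refine ⟨fun x y hxy => ?_, fun j hj => rfl⟩
      show (h : ℂ) * dZ i x = (h : ℂ) * dZ i y
      rw [show dZ i x = dZ i y from by unfold dZ; rw [hxy i (by simp [suppS])]]
  | Sum.inr (Sum.inl i) =>
      refine ⟨fun x y hxy => rfl, fun j hj => ?_⟩
      simp only [suppS, Finset.mem_insert, Finset.mem_singleton, not_or] at hj
      show ((Pi.single i 1 + Pi.single (nextSite i) 1 : Vq n)) j = 0
      rw [Pi.add_apply, Pi.single_eq_of_ne hj.1, Pi.single_eq_of_ne hj.2, add_zero]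
  | Sum.inr (Sum.inr p) =>
      refine ⟨fun x y hxy => ?_, fun j hj => rfl⟩
      have h1 : x p.val.1 = y p.val.1 := hxy _ (by simp [suppS])
      have h2 : x p.val.2 = y p.val.2 := hxy _ (by simp [suppS])
      show _ * (dZ p.val.1 x * dZ p.val.2 x) = _ * (dZ p.val.1 y * dZ p.val.2 y)
      rw [show dZ p.val.1 x = dZ p.val.1 y from by unfold dZ; rw [h1],
          show dZ p.val.2 x = dZ p.val.2 y from by unfold dZ; rw [h2]]

/-! #### Site sums -/

theorem nextSite_injective {n : ℕ} : Function.Injective (nextSite (n := n)) := by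
  intro a b hab
  have ha := a.isLt
  have hb := b.isLt
  have hv : (a.val + 1) % n = (b.val + 1) % n := by
    have h2 := congrArg Fin.val hab
    simpa [nextSite] using h2
  clear hab
  ext
  rcases Nat.lt_or_ge (a.val + 1) n with h1 | h1
  · rw [Nat.mod_eq_of_lt h1] at hv
    rcases Nat.lt_or_ge (b.val + 1) n with h2 | h2
    · rw [Nat.mod_eq_of_lt h2] at hv; omega
    · have hbn : b.val + 1 = n := by omega
      rw [hbn, Nat.mod_self] at hv; omega
  · have han : a.val + 1 = n := by omega
    rw [han, Nat.mod_self] at hv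
    rcases Nat.lt_or_ge (b.val + 1) n with h2 | h2
    · rw [Nat.mod_eq_of_lt h2] at hv; omega
    · omega

theorem nextSite_ne {n : ℕ} (hn : 2 ≤ n) (i : Fin n) : nextSite i ≠ i := by
  intro he
  have hi := i.isLt
  have hv : (i.val + 1) % n = i.val := by
    have h2 := congrArg Fin.val he
    simpa [nextSite] using h2
  rcases Nat.lt_or_ge (i.val + 1) n with h1 | h1
  · rw [Nat.mod_eq_of_lt h1] at hv; omega
  · have han : i.val + 1 = n := by omega
    rw [han, Nat.mod_self] at hv
    omega

theorem sum_ite_card_le {β : Type*} [Fintype β] (P : β → Prop) [DecidablePred P] (c : ℝ)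
    (hc : 0 ≤ c) (N : ℕ) (hcard : (Finset.univ.filter P).card ≤ N) :
    ∑ b : β, (if P b then c else 0) ≤ N * c := by
  rw [← Finset.sum_filter, Finset.sum_const, nsmul_eq_mul]
  exact mul_le_mul_of_nonneg_right (by exact_mod_cast hcard) hc

theorem cp_le {n : ℕ} (g α : ℝ) (hg : 0 ≤ g) (hα : 0 ≤ α) (p : {p : Fin n × Fin n // p.1 < p.2}) :
    g / n * |((p.val.1 : ℕ) : ℝ) - ((p.val.2 : ℕ) : ℝ)| ^ (-α) ≤ g / n := by
  have hlt : (p.val.1 : ℕ) < (p.val.2 : ℕ) := p.prop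
  have hbase : (1:ℝ) ≤ |((p.val.1 : ℕ) : ℝ) - ((p.val.2 : ℕ) : ℝ)| := by
    rw [abs_sub_comm, abs_of_nonneg (by rw [sub_nonneg]; exact_mod_cast le_of_lt hlt)]
    have h3 : ((p.val.1 : ℕ) : ℝ) + 1 ≤ ((p.val.2 : ℕ) : ℝ) := by exact_mod_cast hlt
    linarith
  have h2 := Real.rpow_le_one_of_one_le_of_nonpos hbase (neg_nonpos.mpr hα)
  calc g / n * _ ≤ g / n * 1 := by
        apply mul_le_mul_of_nonneg_left h2 (by positivity)
    _ = g / n := mul_one _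

theorem site_sum {n : ℕ} (h J g α : ℝ) (hh : 0 ≤ h) (hJ : 0 ≤ J) (hg : 0 ≤ g)
    (hα : 0 ≤ α) (hn : 1 ≤ n) (m : Fin n) :
    ∑ s : SIdx n, (if m ∈ suppS s then cbound n h J g α s else 0)
      ≤ h + 2 * J + 2 * g := by
  have hn0 : (n:ℝ) ≠ 0 := by positivity
  rw [Fintype.sum_sum_type, Fintype.sum_sum_type]
  have part1 : ∑ i : Fin n, (if m ∈ suppS (Sum.inl i : SIdx n) then cbound n h J g α (Sum.inl i) else 0) = h := by
    simp only [suppS, cbound, Finset.mem_singleton]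
    rw [Finset.sum_ite_eq Finset.univ m (fun _ => h)]
    simp
  have part2 : ∑ i : Fin n, (if m ∈ suppS (Sum.inr (Sum.inl i) : SIdx n) then cbound n h J g α (Sum.inr (Sum.inl i)) else 0) ≤ 2 * J := by
    simp only [suppS, cbound, Finset.mem_insert, Finset.mem_singleton]
    calc ∑ i : Fin n, (if m = i ∨ m = nextSite i then J else 0)
        ≤ ∑ i : Fin n, ((if m = i then J else 0) + (if m = nextSite i then J else 0)) := by
          apply Finset.sum_le_sum
          intro i _
          by_cases h1 : m = i <;> by_cases h2 : m = nextSite i <;>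
            simp [h1, h2] <;> split_ifs <;> linarith
      _ = (∑ i : Fin n, if m = i then J else 0) + ∑ i : Fin n, (if m = nextSite i then J else 0) := Finset.sum_add_distrib
      _ ≤ J + J := by
          gcongr
          · rw [Finset.sum_ite_eq Finset.univ m (fun _ => J)]; simp
          · have hcard : (Finset.univ.filter fun i : Fin n => m = nextSite i).card ≤ 1 := by
              apply Finset.card_le_one.mpr
              intro a ha b hb
              simp only [Finset.mem_filter] at ha hb
              exact nextSite_injective (ha.2 ▸ hb.2.symm ▸ rfl)
            have h5 := sum_ite_card_le (fun i : Fin n => m = nextSite i) J hJ 1 hcard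
            simpa using h5
      _ = 2 * J := by ring
  have part3 : ∑ p : {p : Fin n × Fin n // p.1 < p.2}, (if m ∈ suppS (Sum.inr (Sum.inr p) : SIdx n) then cbound n h J g α (Sum.inr (Sum.inr p)) else 0) ≤ 2 * g := by
    simp only [suppS, cbound, Finset.mem_insert, Finset.mem_singleton]
    have hgn : (0:ℝ) ≤ g / n := by positivity
    have b1 : ∑ p : {p : Fin n × Fin n // p.1 < p.2}, (if m = p.val.1 then g / n else 0) ≤ g := by
      have hcard : (Finset.univ.filter fun p : {p : Fin n × Fin n // p.1 < p.2} => m = p.val.1).card ≤ n := by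
        have hinj : Set.InjOn (fun p : {p : Fin n × Fin n // p.1 < p.2} => p.val.2)
            (Finset.univ.filter fun p : {p : Fin n × Fin n // p.1 < p.2} => m = p.val.1) := by
          intro a ha b hb hab
          simp only [Finset.coe_filter, Set.mem_setOf_eq] at ha hb
          apply Subtype.ext
          apply Prod.ext
          · rw [← ha.2, ← hb.2]
          · exact hab
        have h5 := Finset.card_le_card_of_injOn
          (fun p : {p : Fin n × Fin n // p.1 < p.2} => p.val.2) (fun a _ => Finset.mem_univ _) hinj
        simpa using h5
      calc ∑ p : {p : Fin n × Fin n // p.1 < p.2}, (if m = p.val.1 then g / n else 0)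
          ≤ (n : ℝ) * (g / n) := sum_ite_card_le _ _ hgn n hcard
        _ = g := by field_simp
    have b2 : ∑ p : {p : Fin n × Fin n // p.1 < p.2}, (if m = p.val.2 then g / n else 0) ≤ g := by
      have hcard : (Finset.univ.filter fun p : {p : Fin n × Fin n // p.1 < p.2} => m = p.val.2).card ≤ n := by
        have hinj : Set.InjOn (fun p : {p : Fin n × Fin n // p.1 < p.2} => p.val.1)
            (Finset.univ.filter fun p : {p : Fin n × Fin n // p.1 < p.2} => m = p.val.2) := by
          intro a ha b hb hab
          simp only [Finset.coe_filter, Set.mem_setOf_eq] at ha hb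
          apply Subtype.ext
          apply Prod.ext
          · exact hab
          · rw [← ha.2, ← hb.2]
        have h5 := Finset.card_le_card_of_injOn
          (fun p : {p : Fin n × Fin n // p.1 < p.2} => p.val.1) (fun a _ => Finset.mem_univ _) hinj
        simpa using h5
      calc ∑ p : {p : Fin n × Fin n // p.1 < p.2}, (if m = p.val.2 then g / n else 0)
          ≤ (n : ℝ) * (g / n) := sum_ite_card_le _ _ hgn n hcard
        _ = g := by field_simp
    calc ∑ p : {p : Fin n × Fin n // p.1 < p.2}, (if m = p.val.1 ∨ m = p.val.2 then g / n * |((p.val.1 : ℕ) : ℝ) - ((p.val.2 : ℕ) : ℝ)| ^ (-α) else 0)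
        ≤ ∑ p : {p : Fin n × Fin n // p.1 < p.2}, ((if m = p.val.1 then g / n else 0) + (if m = p.val.2 then g / n else 0)) := by
          apply Finset.sum_le_sum
          intro p _
          have hcp := cp_le g α hg hα p
          have hcp0 : (0:ℝ) ≤ g / n * |((p.val.1 : ℕ) : ℝ) - ((p.val.2 : ℕ) : ℝ)| ^ (-α) :=
            mul_nonneg hgn (Real.rpow_nonneg (abs_nonneg _) _)
          by_cases h1 : m = p.val.1 <;> by_cases h2 : m = p.val.2 <;>
            simp [h1, h2] <;> split_ifs <;> linarith
      _ = _ + _ := Finset.sum_add_distrib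
      _ ≤ g + g := add_le_add b1 b2
      _ = 2 * g := by ring
  linarith

theorem total_sum {n : ℕ} (h J g α : ℝ) (hh : 0 ≤ h) (hJ : 0 ≤ J) (hg : 0 ≤ g)
    (hα : 0 ≤ α) (hn : 1 ≤ n) :
    ∑ s : SIdx n, cbound n h J g α s ≤ (h + J + g) * n := by
  have hn0 : (n:ℝ) ≠ 0 := by positivity
  rw [Fintype.sum_sum_type, Fintype.sum_sum_type]
  have p1 : ∑ _i : Fin n, h = (n:ℝ) * h := by
    rw [Finset.sum_const, Finset.card_univ, Fintype.card_fin, nsmul_eq_mul]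
  have p2 : ∑ _i : Fin n, J = (n:ℝ) * J := by
    rw [Finset.sum_const, Finset.card_univ, Fintype.card_fin, nsmul_eq_mul]
  have p3 : ∑ p : {p : Fin n × Fin n // p.1 < p.2}, g / n * |((p.val.1 : ℕ) : ℝ) - ((p.val.2 : ℕ) : ℝ)| ^ (-α) ≤ g * n := by
    have hgn : (0:ℝ) ≤ g / n := by positivity
    calc ∑ p : {p : Fin n × Fin n // p.1 < p.2}, g / n * |((p.val.1 : ℕ) : ℝ) - ((p.val.2 : ℕ) : ℝ)| ^ (-α)
        ≤ ∑ _p : {p : Fin n × Fin n // p.1 < p.2}, g / n := by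
          apply Finset.sum_le_sum
          intro p _
          exact cp_le g α hg hα p
      _ = (Fintype.card {p : Fin n × Fin n // p.1 < p.2} : ℝ) * (g / n) := by
          rw [Finset.sum_const, Finset.card_univ, nsmul_eq_mul]
      _ ≤ ((n * n : ℕ) : ℝ) * (g / n) := by
          apply mul_le_mul_of_nonneg_right _ hgn
          have h5 := Fintype.card_subtype_le (fun p : Fin n × Fin n => p.1 < p.2)
          exact_mod_cast le_trans h5 (by simp [Fintype.card_prod])
      _ = g * n := by push_cast; field_simp
  simp only [cbound]
  calc (∑ _i : Fin n, h) + ((∑ _i : Fin n, J)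
        + ∑ p : {p : Fin n × Fin n // p.1 < p.2}, g / n * |((p.val.1 : ℕ) : ℝ) - ((p.val.2 : ℕ) : ℝ)| ^ (-α))
      ≤ (n:ℝ) * h + ((n:ℝ) * J + g * n) := by
        rw [p1, p2]
        exact add_le_add le_rfl (add_le_add le_rfl p3)
    _ = (h + J + g) * n := by ring


/-! #### Nested commutators in symbol form -/

theorem nestedComm_Wm {n : ℕ} : ∀ (L : List (PPq n)) (q : PPq n),
    nestedComm (L.map fun p => Wm p.1 p.2) (Wm q.1 q.2)
      = Wm (L.foldr pcomm q).1 (L.foldr pcomm q).2 := by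
  intro L q
  induction L with
  | nil => rfl
  | cons p L ih =>
      show Wm p.1 p.2 * nestedComm (L.map fun p => Wm p.1 p.2) (Wm q.1 q.2)
          - nestedComm (L.map fun p => Wm p.1 p.2) (Wm q.1 q.2) * Wm p.1 p.2 = _
      rw [ih, List.foldr_cons]
      exact Wm_comm p (L.foldr pcomm q)

theorem nestedComm_Wm' {n : ℕ} (L : List (PPq n)) (ψ : Vq n → ℂ) (t : Vq n) :
    nestedComm (L.map fun p => Wm p.1 p.2) (Wm ψ t)
      = Wm (L.foldr pcomm (ψ, t)).1 (L.foldr pcomm (ψ, t)).2 := nestedComm_Wm L (ψ, t)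

theorem nested_SOp_eq {n : ℕ} (h J g α : ℝ) (L : List (SIdx n)) (s : SIdx n) :
    nestedComm (L.map (SOp n h J g α)) (SOp n h J g α s)
      = Wm ((L.map (pS n h J g α)).foldr pcomm (pS n h J g α s)).1
           ((L.map (pS n h J g α)).foldr pcomm (pS n h J g α s)).2 := by
  have h2 := nestedComm_Wm (L.map (pS n h J g α)) (pS n h J g α s)
  rw [List.map_map] at h2
  have h3 : SOp n h J g α = fun a => Wm (pS n h J g α a).1 (pS n h J g α a).2 :=
    funext (SOp_eq n h J g α)
  rw [h3]
  exact h2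

theorem suppIn_foldr {n : ℕ} (h J g α : ℝ) :
    ∀ (L : List (SIdx n)) (q : PPq n) (Q T : Finset (Fin n)),
      SuppIn q Q → Q ⊆ T → (∀ s ∈ L, suppS s ⊆ T) →
      SuppIn ((L.map (pS n h J g α)).foldr pcomm q) T := by
  intro L
  induction L with
  | nil => intro q Q T hq hQT _; exact hq.mono hQT
  | cons s L ih =>
      intro q Q T hq hQT hL
      show SuppIn (pcomm (pS n h J g α s) ((L.map (pS n h J g α)).foldr pcomm q)) T
      have h1 := (suppIn_pS h J g α s).pcomm
        (ih q Q T hq hQT (fun a ha => hL a (List.mem_cons_of_mem _ ha)))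
      refine h1.mono ?_
      exact Finset.union_subset (hL s List.mem_cons_self) (Finset.Subset.refl T)

/-! #### The counting argument for the upper bound -/

theorem step_sum {n : ℕ} (h J g α : ℝ) (hh : 0 ≤ h) (hJ : 0 ≤ J) (hg : 0 ≤ g)
    (hα : 0 ≤ α) (hn : 1 ≤ n) (U : Finset (Fin n)) (D : ℝ) (hU : (U.card : ℝ) ≤ D)
    (q : PPq n) (hq : SuppIn q U) :
    ∑ a : SIdx n, nsup (pcomm (pS n h J g α a) q).1
      ≤ 2 * (h + 2*J + 2*g) * D * nsup q.1 := by
  have hK : (0:ℝ) ≤ h + 2*J + 2*g := by linarith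
  have hnq : 0 ≤ nsup q.1 := nsup_nonneg _
  have hterm : ∀ (a : SIdx n) (i : Fin n),
      0 ≤ (if i ∈ suppS a then 2 * cbound n h J g α a * nsup q.1 else 0) := by
    intro a i
    have hca := cbound_nonneg h J g α hh hJ hg a
    split
    · positivity
    · exact le_rfl
  have step1 : ∑ a : SIdx n, nsup (pcomm (pS n h J g α a) q).1
      ≤ ∑ a : SIdx n, (if ∃ u ∈ suppS a, u ∈ U then 2 * cbound n h J g α a * nsup q.1 else 0) := by
    apply Finset.sum_le_sum
    intro a _
    by_cases hcase : ∃ u ∈ suppS a, u ∈ U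
    · rw [if_pos hcase]
      calc nsup (pcomm (pS n h J g α a) q).1
          ≤ 2 * nsup (pS n h J g α a).1 * nsup q.1 := nsup_pcomm_le _ _
        _ ≤ 2 * cbound n h J g α a * nsup q.1 := by
            apply mul_le_mul_of_nonneg_right _ hnq
            have h5 := nsup_pS_le h J g α hh hJ hg a
            linarith
    · rw [if_neg hcase]
      rw [nsup_zero_fun (pcomm_eq_zero (suppIn_pS h J g α a) hq ?_)]
      intro i hiA hiU
      exact hcase ⟨i, hiA, hiU⟩
  have step2 : ∀ a : SIdx n,
      (if ∃ u ∈ suppS a, u ∈ U then 2 * cbound n h J g α a * nsup q.1 else 0)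
      ≤ ∑ u ∈ U, (if u ∈ suppS a then 2 * cbound n h J g α a * nsup q.1 else 0) := by
    intro a
    by_cases hcase : ∃ u ∈ suppS a, u ∈ U
    · rw [if_pos hcase]
      obtain ⟨u, hu1, hu2⟩ := hcase
      calc 2 * cbound n h J g α a * nsup q.1
          = (if u ∈ suppS a then 2 * cbound n h J g α a * nsup q.1 else 0) := by rw [if_pos hu1]
        _ ≤ _ := Finset.single_le_sum (fun i _ => hterm a i) hu2
    · rw [if_neg hcase]
      exact Finset.sum_nonneg fun i _ => hterm a i
  calc ∑ a : SIdx n, nsup (pcomm (pS n h J g α a) q).1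
      ≤ ∑ a : SIdx n, (if ∃ u ∈ suppS a, u ∈ U then 2 * cbound n h J g α a * nsup q.1 else 0) := step1
    _ ≤ ∑ a : SIdx n, ∑ u ∈ U, (if u ∈ suppS a then 2 * cbound n h J g α a * nsup q.1 else 0) :=
        Finset.sum_le_sum fun a _ => step2 a
    _ = ∑ u ∈ U, ∑ a : SIdx n, (if u ∈ suppS a then 2 * cbound n h J g α a * nsup q.1 else 0) :=
        Finset.sum_comm
    _ ≤ ∑ _u ∈ U, 2 * (h + 2*J + 2*g) * nsup q.1 := by
        apply Finset.sum_le_sum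
        intro u _
        have h6 : ∑ a : SIdx n, (if u ∈ suppS a then 2 * cbound n h J g α a * nsup q.1 else 0)
            = 2 * nsup q.1 * ∑ a : SIdx n, (if u ∈ suppS a then cbound n h J g α a else 0) := by
          rw [Finset.mul_sum]
          apply Finset.sum_congr rfl
          intro a _
          split <;> ring
        rw [h6]
        calc 2 * nsup q.1 * ∑ a : SIdx n, (if u ∈ suppS a then cbound n h J g α a else 0)
            ≤ 2 * nsup q.1 * (h + 2*J + 2*g) := by
              apply mul_le_mul_of_nonneg_left (site_sum h J g α hh hJ hg hα hn u) (by positivity)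
          _ = 2 * (h + 2*J + 2*g) * nsup q.1 := by ring
    _ = U.card • (2 * (h + 2*J + 2*g) * nsup q.1) := Finset.sum_const _
    _ ≤ D * (2 * (h + 2*J + 2*g) * nsup q.1) := by
        rw [nsmul_eq_mul]
        apply mul_le_mul_of_nonneg_right hU (by positivity)
    _ = 2 * (h + 2*J + 2*g) * D * nsup q.1 := by ring

theorem count_le {n : ℕ} (h J g α : ℝ) (hh : 0 ≤ h) (hJ : 0 ≤ J) (hg : 0 ≤ g)
    (hα : 0 ≤ α) (hn : 1 ≤ n) :
    ∀ (m : ℕ) (q : PPq n) (Q : Finset (Fin n)) (b D : ℝ),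
      SuppIn q Q → (∀ x, ‖q.1 x‖ ≤ b) → 0 ≤ b → ((Q.card : ℝ) + 2 * m ≤ D) →
      ∑ f : Fin m → SIdx n,
          nsup ((((List.finRange m).map f).map (pS n h J g α)).foldr pcomm q).1
        ≤ b * (2 * (h + 2*J + 2*g) * D) ^ m := by
  intro m
  induction m with
  | zero =>
      intro q Q b D hq hqb hb hD
      simp only [List.finRange_zero, List.map_nil, List.foldr_nil, pow_zero, mul_one]
      rw [Finset.sum_const, Finset.card_univ]
      have h1 : Fintype.card (Fin 0 → SIdx n) = 1 := by simp
      rw [h1, one_nsmul]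
      exact nsup_le hqb
  | succ m ih =>
      intro q Q b D hq hqb hb hD
      have hK : (0:ℝ) ≤ h + 2*J + 2*g := by linarith
      have hD0 : (0:ℝ) ≤ D := le_trans (by positivity) hD
      set G : (Fin (m+1) → SIdx n) → ℝ := fun f =>
        nsup ((((List.finRange (m+1)).map f).map (pS n h J g α)).foldr pcomm q).1 with hG
      have e3 : ∀ (a : SIdx n) (ℓ : Fin m → SIdx n),
          G (Fin.consEquiv (fun _ => SIdx n) (a, ℓ))
            = nsup (pcomm (pS n h J g α a)
                ((((List.finRange m).map ℓ).map (pS n h J g α)).foldr pcomm q)).1 := by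
        intro a ℓ
        have hl : (List.finRange (m+1)).map (Fin.cons a ℓ) = a :: ((List.finRange m).map ℓ) := by
          rw [List.finRange_succ, List.map_cons, List.map_map]
          simp [Function.comp_def, Fin.cons_zero, Fin.cons_succ]
        show nsup ((((List.finRange (m+1)).map (Fin.cons a ℓ)).map (pS n h J g α)).foldr pcomm q).1 = _
        rw [hl, List.map_cons, List.foldr_cons]
      have hinner : ∀ ℓ : Fin m → SIdx n,
          ∑ a : SIdx n, nsup (pcomm (pS n h J g α a)
              ((((List.finRange m).map ℓ).map (pS n h J g α)).foldr pcomm q)).1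
            ≤ 2 * (h + 2*J + 2*g) * D
              * nsup ((((List.finRange m).map ℓ).map (pS n h J g α)).foldr pcomm q).1 := by
        intro ℓ
        set U : Finset (Fin n) := Q ∪ Finset.univ.biUnion (fun j => suppS (ℓ j)) with hU
        have hsupp : SuppIn ((((List.finRange m).map ℓ).map (pS n h J g α)).foldr pcomm q) U := by
          apply suppIn_foldr h J g α _ q Q U hq Finset.subset_union_left
          intro s hs
          obtain ⟨j, _, rfl⟩ := List.mem_map.mp hs
          exact le_trans (Finset.subset_biUnion_of_mem (fun j => suppS (ℓ j)) (Finset.mem_univ j))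
            Finset.subset_union_right
        have hcard : (U.card : ℝ) ≤ D := by
          have h1 : U.card ≤ Q.card + (Finset.univ.biUnion (fun j => suppS (ℓ j))).card :=
            Finset.card_union_le _ _
          have h2 : (Finset.univ.biUnion (fun j => suppS (ℓ j))).card
              ≤ ∑ j : Fin m, (suppS (ℓ j)).card := Finset.card_biUnion_le
          have h3 : ∑ j : Fin m, (suppS (ℓ j)).card ≤ ∑ _j : Fin m, 2 :=
            Finset.sum_le_sum fun j _ => suppS_card_le (ℓ j)
          have h4 : ∑ _j : Fin m, (2:ℕ) = 2 * m := by
            rw [Finset.sum_const, Finset.card_univ, Fintype.card_fin, smul_eq_mul]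
            ring
          have h5 : U.card ≤ Q.card + 2 * m := by omega
          have h6 : (U.card : ℝ) ≤ (Q.card : ℝ) + 2 * m := by exact_mod_cast h5
          push_cast at hD
          linarith
        exact step_sum h J g α hh hJ hg hα hn U D hcard _ hsupp
      calc ∑ f : Fin (m+1) → SIdx n, G f
          = ∑ p : SIdx n × (Fin m → SIdx n), G (Fin.consEquiv (fun _ => SIdx n) p) :=
            (Equiv.sum_comp (Fin.consEquiv fun _ => SIdx n) G).symm
        _ = ∑ a : SIdx n, ∑ ℓ : Fin m → SIdx n, G (Fin.consEquiv (fun _ => SIdx n) (a, ℓ)) :=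
            Fintype.sum_prod_type _
        _ = ∑ ℓ : Fin m → SIdx n, ∑ a : SIdx n, G (Fin.consEquiv (fun _ => SIdx n) (a, ℓ)) :=
            Finset.sum_comm
        _ ≤ ∑ ℓ : Fin m → SIdx n, 2 * (h + 2*J + 2*g) * D
              * nsup ((((List.finRange m).map ℓ).map (pS n h J g α)).foldr pcomm q).1 := by
            apply Finset.sum_le_sum
            intro ℓ _
            calc ∑ a : SIdx n, G (Fin.consEquiv (fun _ => SIdx n) (a, ℓ))
                = ∑ a : SIdx n, nsup (pcomm (pS n h J g α a)
                    ((((List.finRange m).map ℓ).map (pS n h J g α)).foldr pcomm q)).1 :=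
                  Finset.sum_congr rfl fun a _ => e3 a ℓ
              _ ≤ _ := hinner ℓ
        _ = 2 * (h + 2*J + 2*g) * D
              * ∑ ℓ : Fin m → SIdx n,
                  nsup ((((List.finRange m).map ℓ).map (pS n h J g α)).foldr pcomm q).1 :=
            (Finset.mul_sum _ _ _).symm
        _ ≤ 2 * (h + 2*J + 2*g) * D * (b * (2 * (h + 2*J + 2*g) * D) ^ m) := by
            apply mul_le_mul_of_nonneg_left _ (by positivity)
            apply ih q Q b D hq hqb hb
            push_cast at hD ⊢
            linarith
        _ = b * (2 * (h + 2*J + 2*g) * D) ^ (m+1) := by ring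

/-! #### The lower bound computation -/

theorem dZ_flip {n : ℕ} (i : Fin n) (t : Vq n) (ht : t i = 1) (x : Vq n) :
    dZ i (x + t) = - dZ i x := by
  have hx : (x + t) i = x i + 1 := by rw [Pi.add_apply, ht]
  unfold dZ
  rw [hx]
  have h2 : ∀ a : Fin 2, a = 0 ∨ a = 1 := by decide
  rcases h2 (x i) with ha | ha <;> rw [ha] <;>
    first
      | rfl
      | (rw [if_neg (show ¬((0:Fin 2) + 1 = 0) by decide),
            if_pos (show ((0:Fin 2) = 0) by decide)]; norm_num)
      | (rw [if_pos (show ((1:Fin 2) + 1 = 0) by decide),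
            if_neg (show ¬((1:Fin 2) = 0) by decide)]; norm_num)

theorem lower_fold {n : ℕ} (h : ℝ) (i : Fin n) (t : Vq n) (ht : t i = 1) (ψ : Vq n → ℂ) :
    ∀ m : ℕ, (List.replicate m ((fun x => (h:ℂ) * dZ i x, (0 : Vq n)) : PPq n)).foldr pcomm (ψ, t)
      = (fun x => (2 * (h:ℂ) * dZ i x) ^ m * ψ x, t) := by
  intro m
  induction m with
  | zero => simp
  | succ m ih =>
      rw [List.replicate_succ, List.foldr_cons, ih]
      unfold pcomm
      refine Prod.ext ?_ ?_
      · funext x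
        show (h:ℂ) * dZ i x * ((2 * (h:ℂ) * dZ i (x + 0)) ^ m * ψ (x + 0))
            - (2 * (h:ℂ) * dZ i x) ^ m * ψ x * ((h:ℂ) * dZ i (x + t))
          = (2 * (h:ℂ) * dZ i x) ^ (m+1) * ψ x
        rw [add_zero, dZ_flip i t ht x]
        ring
      · show (0 : Vq n) + t = t
        rw [zero_add]


/-! #### The special tuples for the lower bound -/

def fiT (n k : ℕ) (i : Fin n) : Fin (2*k+1) → SIdx n :=
  fun j => if j = Fin.last (2*k) then Sum.inr (Sum.inl i) else Sum.inl i

theorem fiT_term_ge {n k : ℕ} (h J g α : ℝ) (hh : 0 < h) (hJ : 0 < J) (hn : 2 ≤ n) (i : Fin n) :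
    (2*h)^(2*k) * J ≤ specNorm (nestedComm
      ((List.finRange (2*k)).map fun j => SOp n h J g α (fiT n k i j.castSucc))
      (SOp n h J g α (fiT n k i (Fin.last (2*k))))) := by
  have hlist : (List.finRange (2*k)).map (fun j => SOp n h J g α (fiT n k i j.castSucc))
      = List.replicate (2*k) (SOp n h J g α (Sum.inl i)) := by
    have h1 : ∀ j : Fin (2*k), fiT n k i j.castSucc = Sum.inl i := by
      intro j
      simp only [fiT]
      rw [if_neg (Fin.castSucc_lt_last j).ne]
    simp only [h1]
    rw [List.map_const', List.length_finRange]
  have hlast : fiT n k i (Fin.last (2*k)) = Sum.inr (Sum.inl i) := if_pos rfl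
  rw [hlist, hlast]
  have htX : ((Pi.single i 1 + Pi.single (nextSite i) 1 : Vq n)) i = 1 := by
    rw [Pi.add_apply, Pi.single_eq_same, Pi.single_eq_of_ne (Ne.symm (nextSite_ne hn i)),
      add_zero]
  have hZ : SOp n h J g α (Sum.inl i) = Wm (fun x => (h:ℂ) * dZ i x) 0 := SOp_eq n h J g α _
  have hX : SOp n h J g α (Sum.inr (Sum.inl i))
      = Wm (fun _ => (J:ℂ)) (Pi.single i 1 + Pi.single (nextSite i) 1) := SOp_eq n h J g α _
  rw [hZ, hX]
  have hrep : List.replicate (2*k) (Wm (fun x => (h:ℂ) * dZ i x) 0)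
      = (List.replicate (2*k) ((fun x => (h:ℂ) * dZ i x, (0:Vq n)) : PPq n)).map
          (fun p => Wm p.1 p.2) := by
    rw [List.map_replicate]
  rw [hrep, nestedComm_Wm',
    lower_fold h i (Pi.single i 1 + Pi.single (nextSite i) 1) htX (fun _ => (J:ℂ)) (2*k)]
  refine le_trans (le_of_eq ?_)
    (le_specNorm_Wm (fun x => (2 * (h:ℂ) * dZ i x) ^ (2*k) * (J:ℂ))
      (Pi.single i 1 + Pi.single (nextSite i) 1) (fun _ => 0))
  have hcast : (2 * (h:ℂ)) = ((2*h : ℝ) : ℂ) := by push_cast; ring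
  rw [norm_mul, norm_pow, norm_mul, norm_dZ, mul_one, hcast, Complex.norm_real,
    Real.norm_eq_abs, abs_of_nonneg (by linarith : (0:ℝ) ≤ 2*h), Complex.norm_real,
    Real.norm_eq_abs, abs_of_nonneg hJ.le]

end Stmt15Aux


/-- there exist constants `C₁, C₂ > 0` depending only on `h, J, g, α, k`
(and not on `n`) such that for every integer `n ≥ 3`,
`C₁·n ≤ α_comm^{(2k+1)} ≤ C₂·n`. -/
theorem stmt15 (h J g α : ℝ) (hh : 0 < h) (hJ : 0 < J) (hg : 0 ≤ g) (hα : 1 < α)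
    (k : ℕ) (hk : 1 ≤ k) :
    ∃ C₁ C₂ : ℝ, 0 < C₁ ∧ 0 < C₂ ∧ ∀ n : ℕ, 3 ≤ n →
      C₁ * n ≤ alphaComm n h J g α k ∧ alphaComm n h J g α k ≤ C₂ * n := by
  have hα0 : (0:ℝ) ≤ α := by linarith
  have hKpos : (0:ℝ) < h + 2*J + 2*g := by linarith
  have hbase : (0:ℝ) < 2 * (h + 2*J + 2*g) * (4*(k:ℝ)+2) := by
    apply mul_pos (mul_pos two_pos hKpos)
    positivity
  refine ⟨(2*h)^(2*k) * J, (h + J + g) * (2 * (h + 2*J + 2*g) * (4*(k:ℝ)+2))^(2*k),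
    mul_pos (pow_pos (by linarith) _) hJ, mul_pos (by linarith) (pow_pos hbase _), ?_⟩
  intro n hn3
  have hn1 : 1 ≤ n := by omega
  have hn2 : 2 ≤ n := by omega
  constructor
  · -- lower bound
    have hterm := fun i : Fin n => fiT_term_ge (k := k) h J g α hh hJ hn2 i
    have hinj : Function.Injective (fiT n k) := by
      intro a b hab
      have h1 := congrFun hab (Fin.last (2*k))
      simp [fiT] at h1
      exact h1
    calc (2*h)^(2*k) * J * n
        = n • ((2*h)^(2*k) * J) := by rw [nsmul_eq_mul]; ring
      _ ≤ ∑ i : Fin n, specNorm (nestedComm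
            ((List.finRange (2*k)).map fun j => SOp n h J g α (fiT n k i j.castSucc))
            (SOp n h J g α (fiT n k i (Fin.last (2*k))))) := by
          have h5 := Finset.card_nsmul_le_sum Finset.univ
            (fun i : Fin n => specNorm (nestedComm
              ((List.finRange (2*k)).map fun j => SOp n h J g α (fiT n k i j.castSucc))
              (SOp n h J g α (fiT n k i (Fin.last (2*k))))))
            ((2*h)^(2*k) * J) (fun i _ => hterm i)
          simpa using h5
      _ = ∑ f ∈ Finset.univ.image (fiT n k), specNorm (nestedComm
            ((List.finRange (2*k)).map fun j => SOp n h J g α (f j.castSucc))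
            (SOp n h J g α (f (Fin.last (2*k))))) := by
          rw [Finset.sum_image (fun a _ b _ hab => hinj hab)]
      _ ≤ ∑ f : Fin (2*k+1) → SIdx n, specNorm (nestedComm
            ((List.finRange (2*k)).map fun j => SOp n h J g α (f j.castSucc))
            (SOp n h J g α (f (Fin.last (2*k))))) :=
          Finset.sum_le_sum_of_subset_of_nonneg (Finset.subset_univ _)
            (fun f _ _ => norm_nonneg _)
      _ = alphaComm n h J g α k := by simp only [alphaComm]
  · -- upper bound
    have hC' : (0:ℝ) ≤ (2 * (h + 2*J + 2*g) * (4*(k:ℝ)+2))^(2*k) := le_of_lt (pow_pos hbase _)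
    have hkey : ∀ a : SIdx n,
        ∑ ℓ : Fin (2*k) → SIdx n,
          nsup ((((List.finRange (2*k)).map ℓ).map (pS n h J g α)).foldr pcomm
            (pS n h J g α a)).1
        ≤ cbound n h J g α a * (2 * (h + 2*J + 2*g) * (4*(k:ℝ)+2))^(2*k) := by
      intro a
      apply count_le h J g α hh.le hJ.le hg hα0 hn1 (2*k) (pS n h J g α a) (suppS a) _ _
        (suppIn_pS h J g α a) (pS_norm_le h J g α hh.le hJ.le hg a)
        (cbound_nonneg h J g α hh.le hJ.le hg a)
      have h5 : ((suppS a).card : ℝ) ≤ 2 := by exact_mod_cast suppS_card_le a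
      push_cast
      linarith
    have expand : alphaComm n h J g α k
        = ∑ a : SIdx n, ∑ ℓ : Fin (2*k) → SIdx n,
            specNorm (nestedComm ((List.finRange (2*k)).map fun j => SOp n h J g α (ℓ j))
              (SOp n h J g α a)) := by
      simp only [alphaComm]
      rw [← Equiv.sum_comp (Fin.snocEquiv (fun _ => SIdx n))
        (fun f : Fin (2*k+1) → SIdx n => specNorm (nestedComm
          ((List.finRange (2*k)).map fun j => SOp n h J g α (f j.castSucc))
          (SOp n h J g α (f (Fin.last (2*k))))))]
      rw [Fintype.sum_prod_type _]
      apply Finset.sum_congr rfl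
      intro a _
      apply Finset.sum_congr rfl
      intro ℓ _
      have h1 : ∀ j : Fin (2*k), (Fin.snocEquiv (fun _ => SIdx n) (a, ℓ)) j.castSucc = ℓ j := by
        intro j
        simp [Fin.snocEquiv]
      have h2 : (Fin.snocEquiv (fun _ => SIdx n) (a, ℓ)) (Fin.last (2*k)) = a := by
        simp [Fin.snocEquiv]
      rw [h2]
      simp only [h1]
    rw [expand]
    have bound1 : ∀ (a : SIdx n) (ℓ : Fin (2*k) → SIdx n),
        specNorm (nestedComm ((List.finRange (2*k)).map fun j => SOp n h J g α (ℓ j))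
          (SOp n h J g α a))
          ≤ nsup ((((List.finRange (2*k)).map ℓ).map (pS n h J g α)).foldr pcomm
              (pS n h J g α a)).1 := by
      intro a ℓ
      have hmm : (List.finRange (2*k)).map (fun j => SOp n h J g α (ℓ j))
          = ((List.finRange (2*k)).map ℓ).map (SOp n h J g α) := by
        rw [List.map_map]; rfl
      rw [hmm, nested_SOp_eq]
      exact specNorm_Wm_le (nsup_nonneg _) (le_nsup _)
    calc ∑ a : SIdx n, ∑ ℓ : Fin (2*k) → SIdx n,
          specNorm (nestedComm ((List.finRange (2*k)).map fun j => SOp n h J g α (ℓ j))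
            (SOp n h J g α a))
        ≤ ∑ a : SIdx n, cbound n h J g α a * (2 * (h + 2*J + 2*g) * (4*(k:ℝ)+2))^(2*k) := by
          apply Finset.sum_le_sum
          intro a _
          exact le_trans (Finset.sum_le_sum fun ℓ _ => bound1 a ℓ) (hkey a)
      _ = (∑ a : SIdx n, cbound n h J g α a)
            * (2 * (h + 2*J + 2*g) * (4*(k:ℝ)+2))^(2*k) := (Finset.sum_mul _ _ _).symm
      _ ≤ ((h + J + g) * n) * (2 * (h + 2*J + 2*g) * (4*(k:ℝ)+2))^(2*k) :=
          mul_le_mul_of_nonneg_right (total_sum h J g α hh.le hJ.le hg hα0 hn1) hC'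
      _ = (h + J + g) * (2 * (h + 2*J + 2*g) * (4*(k:ℝ)+2))^(2*k) * n := by ring
end

section
/- For every integer n ≥ 3, α_comm^{(2k+1)} ≥ 2^{2k} · min{h^{k+1}·J^k, h^k·J^{k+1}} · n. -/
/-! ### Auxiliary material -/

open Matrix

section Pauli

variable {n : ℕ}

/-- bit flip at site `i` -/
def bflip (n : ℕ) (i : Fin n) (x : Fin n → Fin 2) : Fin n → Fin 2 :=
  Function.update x i (x i + 1)

lemma bflip_bflip (i : Fin n) (x : Fin n → Fin 2) : bflip n i (bflip n i x) = x := by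
  have h2 : ∀ a : Fin 2, a + 1 + 1 = a := by decide
  funext t
  by_cases ht : t = i
  · subst ht; simp [bflip, Function.update_self, h2]
  · simp [bflip, Function.update_of_ne ht]

lemma qubitX_apply (i : Fin n) (x y : Fin n → Fin 2) :
    qubitX n i x y = if y = bflip n i x then 1 else 0 := rfl

lemma X_mul_apply (i : Fin n) (M : Matrix (Fin n → Fin 2) (Fin n → Fin 2) ℂ)
    (x y : Fin n → Fin 2) : (qubitX n i * M) x y = M (bflip n i x) y := by
  rw [Matrix.mul_apply]
  rw [Finset.sum_eq_single (bflip n i x)]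
  · simp [qubitX_apply]
  · intro b _ hb; simp [qubitX_apply, hb]
  · intro habs; exact absurd (Finset.mem_univ _) habs

lemma bflip_apply_self (i : Fin n) (x : Fin n → Fin 2) : (bflip n i x) i = x i + 1 := by
  simp [bflip]

lemma bflip_apply_ne (i t : Fin n) (hti : t ≠ i) (x : Fin n → Fin 2) :
    (bflip n i x) t = x t := by
  simp [bflip, Function.update_of_ne hti]

lemma qubitZ_apply_eq (i : Fin n) (x : Fin n → Fin 2) :
    qubitZ n i x x = if x i = 0 then 1 else -1 := by
  simp [qubitZ, Matrix.diagonal_apply_eq]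

lemma qubitZ_apply_ne (i : Fin n) {x y : Fin n → Fin 2} (hxy : x ≠ y) :
    qubitZ n i x y = 0 := by
  simp [qubitZ, Matrix.diagonal_apply_ne _ hxy]

lemma Z_mul_apply (i : Fin n) (M : Matrix (Fin n → Fin 2) (Fin n → Fin 2) ℂ)
    (x y : Fin n → Fin 2) :
    (qubitZ n i * M) x y = (if x i = 0 then 1 else -1) * M x y := by
  simp [qubitZ, Matrix.diagonal_mul]

lemma mul_Z_apply (i : Fin n) (M : Matrix (Fin n → Fin 2) (Fin n → Fin 2) ℂ)
    (x y : Fin n → Fin 2) :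
    (M * qubitZ n i) x y = M x y * (if y i = 0 then 1 else -1) := by
  simp [qubitZ, Matrix.mul_diagonal]

lemma mul_X_apply (i : Fin n) (M : Matrix (Fin n → Fin 2) (Fin n → Fin 2) ℂ)
    (x y : Fin n → Fin 2) : (M * qubitX n i) x y = M x (bflip n i y) := by
  rw [Matrix.mul_apply]
  rw [Finset.sum_eq_single (bflip n i y)]
  · rw [qubitX_apply]
    have : y = bflip n i (bflip n i y) := (bflip_bflip i y).symm
    simp [← this]
  · intro b _ hb
    rw [qubitX_apply]
    have : ¬ (y = bflip n i b) := by
      intro he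
      apply hb
      rw [he, bflip_bflip]
    simp [this]
  · intro habs; exact absurd (Finset.mem_univ _) habs

lemma epssign : ∀ a : Fin 2,
    (if a = 0 then (1:ℂ) else -1) = -(if a + 1 = 0 then (1:ℂ) else -1) := by
  intro a
  have : a = 0 ∨ a = 1 := by omega
  rcases this with h | h <;> subst h
  · norm_num
  · rw [show (1:Fin 2)+1 = 0 from rfl]
    norm_num

lemma X_sq (i : Fin n) : qubitX n i * qubitX n i = 1 := by
  ext x y
  rw [mul_X_apply, qubitX_apply]
  have hiff : (bflip n i y = bflip n i x) ↔ (x = y) := by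
    constructor
    · intro he
      have := congrArg (bflip n i) he
      rw [bflip_bflip, bflip_bflip] at this
      exact this.symm
    · intro he; rw [he]
  rw [if_congr hiff rfl rfl, Matrix.one_apply]

lemma Z_sq (i : Fin n) : qubitZ n i * qubitZ n i = 1 := by
  ext x y
  rw [mul_Z_apply]
  by_cases hxy : x = y
  · subst hxy
    rw [qubitZ_apply_eq]
    by_cases hx : x i = 0 <;> simp [Matrix.one_apply, hx]
  · rw [qubitZ_apply_ne _ hxy, Matrix.one_apply_ne hxy, zero_mul]

lemma ZX_anti (i : Fin n) : qubitZ n i * qubitX n i = -(qubitX n i * qubitZ n i) := by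
  ext x y
  rw [Z_mul_apply, Matrix.neg_apply, X_mul_apply, qubitX_apply]
  by_cases hy : y = bflip n i x
  · subst hy
    rw [if_pos rfl, qubitZ_apply_eq, bflip_apply_self, mul_one, epssign]
  · rw [if_neg hy, qubitZ_apply_ne, mul_zero, neg_zero]
    intro he; exact hy he.symm

lemma ZX_comm (i j : Fin n) (hij : i ≠ j) :
    qubitZ n i * qubitX n j = qubitX n j * qubitZ n i := by
  ext x y
  rw [Z_mul_apply, X_mul_apply, qubitX_apply]
  by_cases hy : y = bflip n j x
  · subst hy
    rw [if_pos rfl, mul_one, qubitZ_apply_eq, bflip_apply_ne j i hij]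
  · rw [if_neg hy, mul_zero, qubitZ_apply_ne]
    intro he; exact hy he.symm

lemma bflip_comm (i j : Fin n) (hij : i ≠ j) (x : Fin n → Fin 2) :
    bflip n j (bflip n i x) = bflip n i (bflip n j x) := by
  funext t
  by_cases hti : t = i
  · rw [hti, bflip_apply_ne j i hij, bflip_apply_self, bflip_apply_self,
      bflip_apply_ne j i hij]
  · by_cases htj : t = j
    · rw [htj, bflip_apply_self, bflip_apply_ne i j (Ne.symm hij),
        bflip_apply_ne i j (Ne.symm hij), bflip_apply_self]
    · rw [bflip_apply_ne j t htj, bflip_apply_ne i t hti, bflip_apply_ne i t hti,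
        bflip_apply_ne j t htj]

lemma XX_comm (i j : Fin n) (hij : i ≠ j) :
    qubitX n i * qubitX n j = qubitX n j * qubitX n i := by
  ext x y
  rw [X_mul_apply, X_mul_apply, qubitX_apply, qubitX_apply, bflip_comm i j hij]

lemma ZZ_comm (i j : Fin n) :
    qubitZ n i * qubitZ n j = qubitZ n j * qubitZ n i := by
  ext x y
  rw [Z_mul_apply, Z_mul_apply]
  by_cases hxy : x = y
  · subst hxy
    rw [qubitZ_apply_eq, qubitZ_apply_eq]
    ring
  · rw [qubitZ_apply_ne _ hxy, qubitZ_apply_ne _ hxy, mul_zero, mul_zero]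

end Pauli

section NestedComm

variable {ι : Type*} [Fintype ι] [DecidableEq ι]

lemma nestedComm_nil (B : Matrix ι ι ℂ) : nestedComm [] B = B := rfl

lemma nestedComm_cons (A : Matrix ι ι ℂ) (l : List (Matrix ι ι ℂ)) (B : Matrix ι ι ℂ) :
    nestedComm (A :: l) B = A * nestedComm l B - nestedComm l B * A := rfl

lemma nestedComm_append (l₁ l₂ : List (Matrix ι ι ℂ)) (B : Matrix ι ι ℂ) :
    nestedComm (l₁ ++ l₂) B = nestedComm l₁ (nestedComm l₂ B) := by
  unfold nestedComm
  rw [List.foldr_append]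

lemma nestedComm_smul (l : List (Matrix ι ι ℂ)) (c : ℂ) (B : Matrix ι ι ℂ) :
    nestedComm l (c • B) = c • nestedComm l B := by
  induction l with
  | nil => rfl
  | cons A l ih =>
    rw [nestedComm_cons, nestedComm_cons, ih, Matrix.mul_smul, Matrix.smul_mul, smul_sub]

lemma engine (A M : Matrix ι ι ℂ) (hsq : A * A = 1) (hanti : A * M = -(M * A)) (c : ℂ)
    (m : ℕ) :
    nestedComm (List.replicate m (c • A)) M
      = (2 * c) ^ m • (if Even m then M else A * M) := by
  have hMA : M * A = -(A * M) := by rw [hanti, neg_neg]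
  have hAMA : (A * M) * A = -M := by
    rw [mul_assoc, hMA, mul_neg, ← mul_assoc, hsq, one_mul]
  have hAAM : A * (A * M) = M := by rw [← mul_assoc, hsq, one_mul]
  induction m with
  | zero => simp [nestedComm_nil]
  | succ m ih =>
    rw [List.replicate_succ, nestedComm_cons, ih]
    by_cases he : Even m
    · rw [if_pos he, if_neg (by simpa [Nat.even_add_one] using he)]
      simp only [Matrix.mul_smul, Matrix.smul_mul, smul_smul, hMA, smul_neg, sub_neg_eq_add,
        ← add_smul]
      congr 1
      ring
    · rw [if_neg he, if_pos (Nat.even_add_one.mpr he)]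
      simp only [Matrix.mul_smul, Matrix.smul_mul, smul_smul, hAAM, hAMA, smul_neg,
        sub_neg_eq_add, ← add_smul]
      congr 1
      ring

lemma engine_odd (A M : Matrix ι ι ℂ) (hsq : A * A = 1) (hanti : A * M = -(M * A)) (c : ℂ)
    {m : ℕ} (hm : ¬ Even m) :
    nestedComm (List.replicate m (c • A)) M = (2 * c) ^ m • (A * M) := by
  rw [engine A M hsq hanti c m, if_neg hm]

lemma engine_even (A M : Matrix ι ι ℂ) (hsq : A * A = 1) (hanti : A * M = -(M * A)) (c : ℂ)
    {m : ℕ} (hm : Even m) :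
    nestedComm (List.replicate m (c • A)) M = (2 * c) ^ m • M := by
  rw [engine A M hsq hanti c m, if_pos hm]

end NestedComm

section SpecNorm

variable {ι : Type*} [Fintype ι] [DecidableEq ι]

lemma specNorm_nonneg (A : Matrix ι ι ℂ) : 0 ≤ specNorm A := norm_nonneg _

lemma specNorm_smul (c : ℂ) (A : Matrix ι ι ℂ) : specNorm (c • A) = ‖c‖ * specNorm A := by
  unfold specNorm
  rw [_root_.map_smul, _root_.map_smul]
  exact norm_smul c (LinearMap.toContinuousLinearMap (Matrix.toEuclideanLin A))

lemma entry_le_specNorm (A : Matrix ι ι ℂ) (x y : ι) : ‖A y x‖ ≤ specNorm A := by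
  have h1 : ‖(LinearMap.toContinuousLinearMap (Matrix.toEuclideanLin A))
      (EuclideanSpace.single x 1)‖ ≤ specNorm A * ‖(EuclideanSpace.single x (1:ℂ) :
        EuclideanSpace ℂ ι)‖ :=
    ContinuousLinearMap.le_opNorm _ _
  rw [EuclideanSpace.norm_single, norm_one, mul_one] at h1
  refine le_trans ?_ h1
  have h2 : (LinearMap.toContinuousLinearMap (Matrix.toEuclideanLin A))
      (EuclideanSpace.single x 1) = Matrix.toEuclideanLin A (EuclideanSpace.single x 1) := rfl
  rw [h2]
  set v : EuclideanSpace ℂ ι := Matrix.toEuclideanLin A (EuclideanSpace.single x 1) with hv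
  have hvy : v y = A y x := by
    rw [hv, Matrix.toEuclideanLin_apply]
    show (A *ᵥ (WithLp.equiv 2 (ι → ℂ)) (EuclideanSpace.single x 1)) y = A y x
    have : (WithLp.equiv 2 (ι → ℂ)) (EuclideanSpace.single x 1) = Pi.single x (1:ℂ) := rfl
    rw [this, Matrix.mulVec_single]
    simp
  rw [← hvy]
  rw [EuclideanSpace.norm_eq v]
  have h3 : ‖v y‖ = Real.sqrt (‖v y‖ ^ 2) := by
    rw [Real.sqrt_sq (norm_nonneg _)]
  rw [h3]
  apply Real.sqrt_le_sqrt
  exact Finset.single_le_sum (f := fun i => ‖v i‖ ^ 2) (fun i _ => sq_nonneg _)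
    (Finset.mem_univ y)

end SpecNorm

lemma blocks_list {M : Type*} (L a b c : ℕ) (hL : L = a + b + c) (g : Fin L → M) (A B C : M)
    (hA : ∀ m : Fin L, m.val < a → g m = A)
    (hB : ∀ m : Fin L, a ≤ m.val → m.val < a + b → g m = B)
    (hC : ∀ m : Fin L, a + b ≤ m.val → g m = C) :
    (List.finRange L).map g
      = List.replicate a A ++ List.replicate b B ++ List.replicate c C := by
  apply List.ext_getElem
  · simp; omega
  · intro idx h1 h2
    simp only [List.getElem_map, List.getElem_finRange]
    have hval : ∀ (hh : idx < L), ((⟨idx, hh⟩ : Fin L) : ℕ) = idx := fun _ => rfl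
    rw [List.getElem_append]
    split_ifs with h3
    · rw [List.getElem_append]
      split_ifs with h4
      · rw [List.getElem_replicate]
        exact hA _ (by simp only [List.length_replicate] at h4; simpa using h4)
      · rw [List.getElem_replicate]
        simp only [List.length_append, List.length_replicate] at h3 h4
        exact hB _ (by simp only [Fin.coe_cast, hval]; omega)
          (by simp only [Fin.coe_cast, hval]; omega)
    · rw [List.getElem_replicate]
      simp only [List.length_append, List.length_replicate] at h3
      exact hC _ (by simp only [Fin.coe_cast, hval]; omega)

section Relations

variable {n : ℕ} (i j : Fin n)

lemma rel1 (hij : i ≠ j) :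
    (qubitX n i * qubitX n j) * (qubitX n i * qubitX n j) = 1 := by
  set Xi := qubitX n i
  set Xj := qubitX n j
  have hXX : Xj * Xi = Xi * Xj := XX_comm j i (Ne.symm hij)
  calc (Xi*Xj)*(Xi*Xj) = Xi*((Xj*Xi)*Xj) := by rw [mul_assoc, ← mul_assoc Xj]
    _ = Xi*((Xi*Xj)*Xj) := by rw [hXX]
    _ = Xi*(Xi*(Xj*Xj)) := by rw [mul_assoc]
    _ = Xi*(Xi*1) := by rw [X_sq]
    _ = 1 := by rw [mul_one, X_sq]

lemma rel2 (hij : i ≠ j) :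
    (qubitX n i * qubitX n j) * qubitZ n i = -(qubitZ n i * (qubitX n i * qubitX n j)) := by
  set Xi := qubitX n i
  set Xj := qubitX n j
  set Zi := qubitZ n i
  have hXZi : Xi * Zi = -(Zi * Xi) := by rw [ZX_anti i, neg_neg]
  have hZiXj : Zi * Xj = Xj * Zi := ZX_comm i j hij
  calc (Xi*Xj)*Zi = Xi*(Xj*Zi) := by rw [mul_assoc]
    _ = Xi*(Zi*Xj) := by rw [hZiXj]
    _ = (Xi*Zi)*Xj := by rw [mul_assoc]
    _ = (-(Zi*Xi))*Xj := by rw [hXZi]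
    _ = -(Zi*(Xi*Xj)) := by rw [neg_mul, mul_assoc]

lemma rel3 (hij : i ≠ j) :
    qubitZ n j * ((qubitX n i * qubitX n j) * qubitZ n i)
      = -(((qubitX n i * qubitX n j) * qubitZ n i) * qubitZ n j) := by
  set Xi := qubitX n i
  set Xj := qubitX n j
  set Zi := qubitZ n i
  set Zj := qubitZ n j
  have hZjXi : Zj * Xi = Xi * Zj := ZX_comm j i (Ne.symm hij)
  have hZjXj : Zj * Xj = -(Xj * Zj) := ZX_anti j
  have hZZ : Zi * Zj = Zj * Zi := ZZ_comm i j
  calc Zj*((Xi*Xj)*Zi) = (Zj*Xi)*(Xj*Zi) := by rw [mul_assoc Xi, ← mul_assoc Zj]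
    _ = (Xi*Zj)*(Xj*Zi) := by rw [hZjXi]
    _ = Xi*((Zj*Xj)*Zi) := by rw [mul_assoc, ← mul_assoc Zj]
    _ = Xi*((-(Xj*Zj))*Zi) := by rw [hZjXj]
    _ = -(Xi*(Xj*(Zj*Zi))) := by rw [neg_mul, mul_neg, mul_assoc]
    _ = -(Xi*(Xj*(Zi*Zj))) := by rw [hZZ]
    _ = -(((Xi*Xj)*Zi)*Zj) := by rw [mul_assoc (Xi*Xj), mul_assoc Xi]

lemma rel5 (hij : i ≠ j) :
    (qubitX n i * qubitX n j) * ((qubitX n i * qubitX n j) * qubitZ n i) = qubitZ n i := by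
  rw [← mul_assoc, rel1 i j hij, one_mul]

lemma rel4 (hij : i ≠ j) :
    (qubitX n i * qubitX n j) * ((qubitX n i * qubitX n j) * qubitZ n i)
      = -((((qubitX n i * qubitX n j) * qubitZ n i)) * (qubitX n i * qubitX n j)) := by
  set B := qubitX n i * qubitX n j with hB
  have h1 : (B * qubitZ n i) * B = -(qubitZ n i) := by
    have h2 : qubitZ n i * B = -(B * qubitZ n i) := by
      rw [rel2 i j hij, neg_neg]
    rw [mul_assoc, h2, mul_neg, ← mul_assoc, rel1 i j hij, one_mul]
  rw [h1, rel5 i j hij, neg_neg]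

lemma entryW (hij : i ≠ j) (x : Fin n → Fin 2) :
    ‖(qubitZ n j * ((qubitX n i * qubitX n j) * qubitZ n i)) x (bflip n j (bflip n i x))‖
      = 1 := by
  rw [Z_mul_apply, mul_assoc, X_mul_apply, X_mul_apply, qubitZ_apply_eq, norm_mul]
  split_ifs <;> simp

lemma entryZ (x : Fin n → Fin 2) : ‖qubitZ n i x x‖ = 1 := by
  rw [qubitZ_apply_eq]
  split_ifs <;> simp

lemma entryB (hij : i ≠ j) (x : Fin n → Fin 2) :
    ‖(qubitX n i * qubitX n j) x (bflip n j (bflip n i x))‖ = 1 := by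
  rw [X_mul_apply, qubitX_apply, if_pos rfl]
  simp

end Relations

/-- tuple builder: blocks of sizes `a`, `b`, `L - a - b`, and a final base entry. -/
def tupF (n L a b : ℕ) (u v w base : SIdx n) : Fin (L+1) → SIdx n :=
  fun m => if m.val < a then u else if m.val < a + b then v
    else if m.val < L then w else base

lemma tupF_last {n L a b : ℕ} {u v w base : SIdx n} (hab : a + b ≤ L) :
    tupF n L a b u v w base (Fin.last L) = base := by
  unfold tupF
  have hL : (Fin.last L).val = L := rfl
  rw [if_neg (by rw [hL]; omega), if_neg (by rw [hL]; omega), if_neg (by rw [hL]; omega)]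

/-- the tuple used for odd `k` -/
def TAodd (n k : ℕ) (i : Fin n) : Fin (2*k+1) → SIdx n :=
  tupF n (2*k) k k (Sum.inl (nextSite i)) (Sum.inr (Sum.inl i)) (Sum.inr (Sum.inl i))
    (Sum.inl i)

/-- the tuple used for even `k` -/
def TAeven (n k : ℕ) (i : Fin n) : Fin (2*k+1) → SIdx n :=
  tupF n (2*k) (k-1) k (Sum.inr (Sum.inl i)) (Sum.inl (nextSite i)) (Sum.inr (Sum.inl i))
    (Sum.inl i)

lemma sum_lb (n : ℕ) (h J g α : ℝ) (k : ℕ) (c : ℝ)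
    (T : Fin n → (Fin (2*k+1) → SIdx n)) (hT : Function.Injective T)
    (hc : ∀ i : Fin n, c ≤ specNorm (nestedComm
        ((List.finRange (2*k)).map fun jj => SOp n h J g α (T i jj.castSucc))
        (SOp n h J g α (T i (Fin.last (2*k)))))) :
    c * n ≤ alphaComm n h J g α k := by
  classical
  set F : (Fin (2*k+1) → SIdx n) → ℝ := fun f => specNorm (nestedComm
      ((List.finRange (2*k)).map fun jj => SOp n h J g α (f jj.castSucc))
      (SOp n h J g α (f (Fin.last (2*k))))) with hF
  have h0 : ∀ f, 0 ≤ F f := fun f => specNorm_nonneg _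
  calc c * n = ∑ _i : Fin n, c := by
        rw [Finset.sum_const, Finset.card_univ, Fintype.card_fin, nsmul_eq_mul, mul_comm]
    _ ≤ ∑ i : Fin n, F (T i) := Finset.sum_le_sum (fun i _ => hc i)
    _ = ∑ f ∈ Finset.univ.image T, F f :=
        (Finset.sum_image (fun a _ b _ hab => hT hab)).symm
    _ ≤ ∑ f : (Fin (2*k+1) → SIdx n), F f :=
        Finset.sum_le_sum_of_subset_of_nonneg (Finset.subset_univ _) (fun f _ _ => h0 f)
    _ = alphaComm n h J g α k := rfl

lemma caseA_odd (n : ℕ) (h J g α : ℝ) (hh : 0 < h) (hJ : 0 < J) (k : ℕ) (hk : 1 ≤ k)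
    (hko : ¬ Even k) (i : Fin n) (hij : i ≠ nextSite i) :
    2^(2*k) * (h^(k+1) * J^k) ≤ specNorm (nestedComm
      ((List.finRange (2*k)).map fun jj => SOp n h J g α (TAodd n k i jj.castSucc))
      (SOp n h J g α (TAodd n k i (Fin.last (2*k))))) := by
  set j := nextSite i with hj
  set Zi := qubitZ n i
  set Zj := qubitZ n j
  set B := qubitX n i * qubitX n j with hB
  have hlist : ((List.finRange (2*k)).map fun jj => SOp n h J g α (TAodd n k i jj.castSucc))
      = List.replicate k ((h:ℂ) • Zj) ++ List.replicate k ((J:ℂ) • B)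
        ++ List.replicate 0 ((J:ℂ) • B) := by
    apply blocks_list (2*k) k k 0 (by omega)
    · intro m hm
      have hcs : (m.castSucc).val = m.val := rfl
      show SOp n h J g α (tupF n (2*k) k k _ _ _ _ m.castSucc) = _
      unfold tupF
      rw [if_pos (by rw [hcs]; exact hm)]
      rfl
    · intro m hm1 hm2
      have hcs : (m.castSucc).val = m.val := rfl
      show SOp n h J g α (tupF n (2*k) k k _ _ _ _ m.castSucc) = _
      unfold tupF
      rw [if_neg (by rw [hcs]; omega), if_pos (by rw [hcs]; omega)]
      rfl
    · intro m hm
      exact absurd m.isLt (by omega)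
  have hbase : SOp n h J g α (TAodd n k i (Fin.last (2*k))) = (h:ℂ) • Zi := by
    show SOp n h J g α (tupF n (2*k) k k _ _ _ _ (Fin.last (2*k))) = _
    rw [tupF_last (by omega)]
    rfl
  rw [hlist, hbase, List.replicate_zero, List.append_nil, nestedComm_append,
    nestedComm_smul, engine_odd B Zi (rel1 i j hij) (rel2 i j hij) _ hko,
    nestedComm_smul, nestedComm_smul,
    engine_odd Zj (B * Zi) (Z_sq j) (rel3 i j hij) _ hko,
    smul_smul, smul_smul, specNorm_smul]
  have hs : (h:ℂ) * (2*(J:ℂ))^k * (2*(h:ℂ))^k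
      = ((h * (2*J)^k * (2*h)^k : ℝ) : ℂ) := by
    push_cast
    ring
  rw [hs, Complex.norm_real, Real.norm_eq_abs,
    abs_of_pos (by positivity)]
  have hW : (1:ℝ) ≤ specNorm (Zj * (B * Zi)) := by
    have := entry_le_specNorm (Zj * (B * Zi))
      (bflip n j (bflip n i (fun _ => 0))) (fun _ => 0)
    rwa [entryW i j hij] at this
  have hr : h * (2*J)^k * (2*h)^k = 2^(2*k) * (h^(k+1) * J^k) := by
    rw [mul_pow, mul_pow, two_mul, pow_add]
    ring
  calc 2^(2*k) * (h^(k+1) * J^k) = h * (2*J)^k * (2*h)^k * 1 := by rw [hr, mul_one]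
    _ ≤ h * (2*J)^k * (2*h)^k * specNorm (Zj * (B * Zi)) := by
        apply mul_le_mul_of_nonneg_left hW (by positivity)

lemma caseA_even (n : ℕ) (h J g α : ℝ) (hh : 0 < h) (hJ : 0 < J) (k : ℕ) (hk : 1 ≤ k)
    (hke : Even k) (i : Fin n) (hij : i ≠ nextSite i) :
    2^(2*k) * (h^(k+1) * J^k) ≤ specNorm (nestedComm
      ((List.finRange (2*k)).map fun jj => SOp n h J g α (TAeven n k i jj.castSucc))
      (SOp n h J g α (TAeven n k i (Fin.last (2*k))))) := by
  set j := nextSite i with hj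
  set Zi := qubitZ n i
  set Zj := qubitZ n j
  set B := qubitX n i * qubitX n j with hB
  have hodd1 : ¬ Even (k-1) := by
    rcases hke with ⟨t, ht⟩
    rintro ⟨u, hu⟩
    omega
  have hodd2 : ¬ Even 1 := by decide
  have hlist : ((List.finRange (2*k)).map fun jj => SOp n h J g α (TAeven n k i jj.castSucc))
      = List.replicate (k-1) ((J:ℂ) • B) ++ List.replicate k ((h:ℂ) • Zj)
        ++ List.replicate 1 ((J:ℂ) • B) := by
    apply blocks_list (2*k) (k-1) k 1 (by omega)
    · intro m hm
      have hcs : (m.castSucc).val = m.val := rfl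
      show SOp n h J g α (tupF n (2*k) (k-1) k _ _ _ _ m.castSucc) = _
      unfold tupF
      rw [if_pos (by rw [hcs]; exact hm)]
      rfl
    · intro m hm1 hm2
      have hcs : (m.castSucc).val = m.val := rfl
      show SOp n h J g α (tupF n (2*k) (k-1) k _ _ _ _ m.castSucc) = _
      unfold tupF
      rw [if_neg (by rw [hcs]; omega), if_pos (by rw [hcs]; omega)]
      rfl
    · intro m hm
      have hcs : (m.castSucc).val = m.val := rfl
      have hmlt : m.val < 2*k := m.isLt
      show SOp n h J g α (tupF n (2*k) (k-1) k _ _ _ _ m.castSucc) = _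
      unfold tupF
      rw [if_neg (by rw [hcs]; omega), if_neg (by rw [hcs]; omega),
        if_pos (by rw [hcs]; omega)]
      rfl
  have hbase : SOp n h J g α (TAeven n k i (Fin.last (2*k))) = (h:ℂ) • Zi := by
    show SOp n h J g α (tupF n (2*k) (k-1) k _ _ _ _ (Fin.last (2*k))) = _
    rw [tupF_last (by omega)]
    rfl
  rw [hlist, hbase, nestedComm_append, nestedComm_append]
  simp only [nestedComm_smul]
  rw [engine_odd B Zi (rel1 i j hij) (rel2 i j hij) _ hodd2]
  simp only [nestedComm_smul]
  rw [engine_even Zj (B * Zi) (Z_sq j) (rel3 i j hij) _ hke]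
  simp only [nestedComm_smul]
  rw [engine_odd B (B * Zi) (rel1 i j hij) (rel4 i j hij) _ hodd1,
    rel5 i j hij]
  simp only [smul_smul]
  rw [specNorm_smul]
  obtain ⟨m, rfl⟩ : ∃ m, k = m + 1 := ⟨k - 1, by omega⟩
  have hm1 : m + 1 - 1 = m := by omega
  rw [hm1]
  have hs : (h:ℂ) * ((2*(J:ℂ))^1 * ((2*(h:ℂ))^(m+1) * (2*(J:ℂ))^m))
      = ((h * ((2*J)^1 * ((2*h)^(m+1) * (2*J)^m)) : ℝ) : ℂ) := by
    push_cast
    ring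
  rw [hs, Complex.norm_real, Real.norm_eq_abs, abs_of_pos (by positivity)]
  have hW : (1:ℝ) ≤ specNorm Zi := by
    have := entry_le_specNorm Zi (fun _ => 0) (fun _ => 0)
    rwa [entryZ i] at this
  have hr : h * ((2*J)^1 * ((2*h)^(m+1) * (2*J)^m)) = 2^(2*(m+1)) * (h^(m+1+1) * J^(m+1)) := by
    rw [mul_pow, mul_pow, mul_pow]
    ring
  calc 2^(2*(m+1)) * (h^(m+1+1) * J^(m+1))
      = h * ((2*J)^1 * ((2*h)^(m+1) * (2*J)^m)) * 1 := by rw [hr, mul_one]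
    _ ≤ h * ((2*J)^1 * ((2*h)^(m+1) * (2*J)^m)) * specNorm Zi := by
        apply mul_le_mul_of_nonneg_left hW (by positivity)

/-- for every integer `n ≥ 3`,
`α_comm^{(2k+1)} ≥ 2^{2k}·min{h^{k+1}·J^k, h^k·J^{k+1}}·n`. -/
theorem stmt16 (h J g α : ℝ) (hh : 0 < h) (hJ : 0 < J) (hg : 0 ≤ g) (hα : 1 < α)
    (k : ℕ) (hk : 1 ≤ k) (n : ℕ) (hn : 3 ≤ n) :
    2 ^ (2 * k) * min (h ^ (k + 1) * J ^ k) (h ^ k * J ^ (k + 1)) * (n : ℝ)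
      ≤ alphaComm n h J g α k := by
  have hij : ∀ i : Fin n, i ≠ nextSite i := by
    intro i he
    have hv : i.val = (i.val + 1) % n := congrArg Fin.val he
    by_cases hlt : i.val + 1 < n
    · rw [Nat.mod_eq_of_lt hlt] at hv
      omega
    · have h1 : i.val + 1 = n := by have := i.isLt; omega
      rw [h1, Nat.mod_self] at hv
      omega
  have hmin : min (h ^ (k + 1) * J ^ k) (h ^ k * J ^ (k + 1)) ≤ h ^ (k + 1) * J ^ k :=
    min_le_left _ _
  have hstep : 2 ^ (2*k) * min (h ^ (k + 1) * J ^ k) (h ^ k * J ^ (k + 1)) * (n:ℝ)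
      ≤ (2 ^ (2*k) * (h ^ (k + 1) * J ^ k)) * (n:ℝ) := by
    apply mul_le_mul_of_nonneg_right _ (by positivity)
    apply mul_le_mul_of_nonneg_left hmin (by positivity)
  refine le_trans hstep ?_
  rcases Nat.even_or_odd k with hke | hko
  · apply sum_lb n h J g α k _ (fun i => TAeven n k i)
    · intro a b he
      have h1 : TAeven n k a (Fin.last (2*k)) = TAeven n k b (Fin.last (2*k)) :=
        congrFun he _
      unfold TAeven at h1
      rw [tupF_last (by omega), tupF_last (by omega)] at h1
      exact Sum.inl.inj h1
    · intro i
      exact caseA_even n h J g α hh hJ k hk hke i (hij i)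
  · apply sum_lb n h J g α k _ (fun i => TAodd n k i)
    · intro a b he
      have h1 : TAodd n k a (Fin.last (2*k)) = TAodd n k b (Fin.last (2*k)) :=
        congrFun he _
      unfold TAodd at h1
      rw [tupF_last (by omega), tupF_last (by omega)] at h1
      exact Sum.inl.inj h1
    · intro i
      exact caseA_odd n h J g α hh hJ k hk (Nat.not_even_iff_odd.mpr hko) i (hij i)
end
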